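/- arXiv:1002.2551 — 12 statements merged into one kernel-verified Lean document; each statement's English description precedes it below -/
import Mathlib

section
/- Let 𝒜 be a unital C*-algebra and A, B ∈ 𝒜 elements satisfying A² = A*, B² = B*, AB + BA = 0, AB* = 0, BA* = 0, and AA* + BB* = 1. Then A³ + B³ = 1, A³ and B³ are self-adjoint idempotents (projections), and AB = BA = 0. -/
/-- In a unital C*-algebra, if `A² = A*`, `B² = B*`, `AB + BA = 0`,
`AB* = 0`, `BA* = 0` and `AA* + BB* = 1`, then `A³ + B³ = 1`, `A³` and `B³` are
projections, and `AB = BA = 0`. (Relations for `QISO⁺(ℤ₃)`.) -/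
theorem qiso_Z3_relations
    {𝒜 : Type*} [NormedRing 𝒜] [StarRing 𝒜] [CStarRing 𝒜] [CompleteSpace 𝒜]
    [NormedAlgebra ℂ 𝒜] [StarModule ℂ 𝒜]
    (A B : 𝒜)
    (hA : A ^ 2 = star A) (hB : B ^ 2 = star B)
    (hAB : A * B + B * A = 0)
    (hABs : A * star B = 0) (hBAs : B * star A = 0)
    (hunit : A * star A + B * star B = 1) :
    A ^ 3 + B ^ 3 = 1 ∧
    (star (A ^ 3) = A ^ 3 ∧ A ^ 3 * A ^ 3 = A ^ 3) ∧
    (star (B ^ 3) = B ^ 3 ∧ B ^ 3 * B ^ 3 = B ^ 3) ∧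
    A * B = 0 ∧ B * A = 0 := by
  -- A³ in two forms
  have hA31 : A ^ 3 = star A * A := by rw [pow_succ, hA]
  have hA32 : A ^ 3 = A * star A := by
    rw [show A ^ 3 = A * A ^ 2 by noncomm_ring, hA]
  have hB31 : B ^ 3 = star B * B := by rw [pow_succ, hB]
  have hB32 : B ^ 3 = B * star B := by
    rw [show B ^ 3 = B * B ^ 2 by noncomm_ring, hB]
  have hsum : A ^ 3 + B ^ 3 = 1 := by rw [hA32, hB32, hunit]
  -- A³B³ = 0 and B³A³ = 0
  have hPQ : A ^ 3 * B ^ 3 = 0 := by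
    rw [hA31, hB31, show star A * A * (star B * B) = star A * (A * star B) * B by
      noncomm_ring, hABs, mul_zero, zero_mul]
  have hQP : B ^ 3 * A ^ 3 = 0 := by
    rw [hB31, hA31, show star B * B * (star A * A) = star B * (B * star A) * A by
      noncomm_ring, hBAs, mul_zero, zero_mul]
  have hBfromSum : B ^ 3 = 1 - A ^ 3 := by rw [← hsum]; abel
  have hAfromSum : A ^ 3 = 1 - B ^ 3 := by rw [← hsum]; abel
  have hPidem : A ^ 3 * A ^ 3 = A ^ 3 := by
    conv_lhs => rw [show (A ^ 3 : 𝒜) * A ^ 3 = A ^ 3 * (1 - B ^ 3) by rw [← hAfromSum]]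
    rw [mul_sub, mul_one, hPQ, sub_zero]
  have hQidem : B ^ 3 * B ^ 3 = B ^ 3 := by
    conv_lhs => rw [show (B ^ 3 : 𝒜) * B ^ 3 = B ^ 3 * (1 - A ^ 3) by rw [← hBfromSum]]
    rw [mul_sub, mul_one, hQP, sub_zero]
  have hPsa : star (A ^ 3) = A ^ 3 := by
    rw [hA32, star_mul, star_star]
  have hQsa : star (B ^ 3) = B ^ 3 := by
    rw [hB32, star_mul, star_star]
  -- AB = 0 via (AB)(AB)* = 0
  have hBBs : B * star B = 1 - A * star A := by rw [← hunit]; abel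
  have key : (A * B) * star (A * B) = 0 := by
    have h1 : (A * B) * star (A * B) = A * (B * star B) * star A := by
      rw [star_mul]; noncomm_ring
    have h2 : A * (A * star A) * star A = star A * A := by
      calc A * (A * star A) * star A = (A * A) * (star A * star A) := by noncomm_ring
        _ = A ^ 2 * star (A * A) := by rw [star_mul, ← pow_two]
        _ = star A * A := by rw [show A * A = A ^ 2 by noncomm_ring, hA, star_star]
    rw [h1, hBBs, mul_sub, mul_one, sub_mul, h2]
    rw [show A * star A - star A * A = A ^ 3 - A ^ 3 by rw [← hA31, ← hA32], sub_self]
  have hABzero : A * B = 0 := by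
    have := CStarRing.mul_star_self_eq_zero_iff (A * B)
    rwa [key, eq_self_iff_true, true_iff] at this
  have hBAzero : B * A = 0 := by
    have := hAB; rw [hABzero, zero_add] at this; exact this
  exact ⟨hsum, ⟨hPsa, hPidem⟩, ⟨hQsa, hQidem⟩, hABzero, hBAzero⟩
end

section
/- Let n ≥ 5 be an integer, 𝒜 a unital C*-algebra, and A, B ∈ 𝒜 normal elements satisfying AB + BA = 0, A*B + BA* = 0, A²B = 0, B²A = 0, A^{n−1} = A*, B^{n−1} = B*, and AA* + BB* = 1. Then AB = BA = 0, Aⁿ and Bⁿ are self-adjoint idempotents (projections), and Aⁿ + Bⁿ = 1. -/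
private lemma aux_pow_zero {R : Type*} [Ring R] (B A : R) (h : B ^ 2 * A = 0)
    (j k : ℕ) : B ^ (j + 2) * A ^ (k + 1) = 0 := by
  have e : B ^ (j + 2) * A ^ (k + 1) = B ^ j * (B ^ 2 * A * A ^ k) := by
    rw [pow_add, pow_succ' A k, mul_assoc, ← mul_assoc (B ^ 2)]
  rw [e, h, zero_mul, mul_zero]

/-- In a unital C*-algebra, let `n ≥ 5` and let `A`, `B` be normal
elements with `AB + BA = 0`, `A*B + BA* = 0`, `A²B = 0`, `B²A = 0`, `A^{n-1} = A*`,
`B^{n-1} = B*` and `AA* + BB* = 1`. Then `AB = BA = 0`, `Aⁿ` and `Bⁿ` are projections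
and `Aⁿ + Bⁿ = 1`. (Relations for `QISO⁺(ℤₙ)`, `n ≥ 5`.) -/
theorem qiso_Zn_relations
    {𝒜 : Type*} [NormedRing 𝒜] [StarRing 𝒜] [CStarRing 𝒜] [CompleteSpace 𝒜]
    [NormedAlgebra ℂ 𝒜] [StarModule ℂ 𝒜]
    (n : ℕ) (hn : 5 ≤ n)
    (A B : 𝒜)
    (hAnormal : A * star A = star A * A) (hBnormal : B * star B = star B * B)
    (h1 : A * B + B * A = 0)
    (h2 : star A * B + B * star A = 0)
    (h3 : A ^ 2 * B = 0) (h4 : B ^ 2 * A = 0)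
    (h5 : A ^ (n - 1) = star A) (h6 : B ^ (n - 1) = star B)
    (hunit : A * star A + B * star B = 1) :
    A * B = 0 ∧ B * A = 0 ∧
    (star (A ^ n) = A ^ n ∧ A ^ n * A ^ n = A ^ n) ∧
    (star (B ^ n) = B ^ n ∧ B ^ n * B ^ n = B ^ n) ∧
    A ^ n + B ^ n = 1 := by
  obtain ⟨m, rfl⟩ : ∃ m, n = m + 5 := ⟨n - 5, by omega⟩
  have h5' : A ^ (m + 4) = star A := by
    rw [show m + 4 = (m + 5) - 1 by omega]; exact h5
  have h6' : B ^ (m + 4) = star B := by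
    rw [show m + 4 = (m + 5) - 1 by omega]; exact h6
  -- AB = 0 via (AB)(AB)* = 0
  have hBnAn : B ^ (m + 4 + 1) * A ^ (m + 4) = 0 := aux_pow_zero B A h4 (m + 3) (m + 3)
  have hXX : (A * B) * star (A * B) = 0 := by
    rw [star_mul, ← h5', ← h6']
    calc A * B * (B ^ (m + 4) * A ^ (m + 4))
        = A * (B * B ^ (m + 4) * A ^ (m + 4)) := by noncomm_ring
      _ = A * (B ^ (m + 4 + 1) * A ^ (m + 4)) := by rw [← pow_succ']
      _ = 0 := by rw [hBnAn, mul_zero]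
  have hAB : A * B = 0 := (CStarRing.mul_star_self_eq_zero_iff _).mp hXX
  have hBA : B * A = 0 := by rwa [hAB, zero_add] at h1
  -- B^(m+5) * A = 0 and A^(m+5) * B = 0
  have hBBA : B ^ (m + 4 + 1) * A = 0 := by
    have h := aux_pow_zero B A h4 (m + 3) 0
    rwa [pow_one] at h
  have hAAB : A ^ (m + 4 + 1) * B = 0 := by
    have h := aux_pow_zero A B h3 (m + 3) 0
    rwa [pow_one] at h
  -- A * A* * A = A
  have hA1 : A * star A * A = A := by
    have h := congrArg (fun x => x * A) hunit
    simp only [add_mul, one_mul] at h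
    rw [← h6', ← pow_succ'] at h
    rwa [hBBA, add_zero] at h
  have hB1 : B * star B * B = B := by
    have h := congrArg (fun x => x * B) hunit
    simp only [add_mul, one_mul] at h
    rw [← h5', ← pow_succ'] at h
    rwa [hAAB, zero_add] at h
  -- A^(m+6) = A, B^(m+6) = B
  have hA6 : A ^ (m + 6) = A := by
    rw [← h5', ← pow_succ', ← pow_succ] at hA1
    exact hA1
  have hB6 : B ^ (m + 6) = B := by
    rw [← h6', ← pow_succ', ← pow_succ] at hB1
    exact hB1
  -- A^n = A A*, B^n = B B*
  have hAn : A ^ (m + 5) = A * star A := by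
    rw [show m + 5 = m + 4 + 1 from rfl, pow_succ', h5']
  have hBn : B ^ (m + 5) = B * star B := by
    rw [show m + 5 = m + 4 + 1 from rfl, pow_succ', h6']
  refine ⟨hAB, hBA, ⟨?_, ?_⟩, ⟨?_, ?_⟩, ?_⟩
  · rw [hAn, star_mul, star_star]
  · rw [← pow_add, show m + 5 + (m + 5) = (m + 4) + (m + 6) by omega, pow_add, hA6,
      ← pow_succ]
  · rw [hBn, star_mul, star_star]
  · rw [← pow_add, show m + 5 + (m + 5) = (m + 4) + (m + 6) by omega, pow_add, hB6,
      ← pow_succ]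
  · rw [hAn, hBn, hunit]
end

section
/- There exist self-adjoint 2×2 complex matrices A and B such that A² + B² = 1, AB + BA = 0, A²B + B³ = B, B²A + A³ = A, AA* + BB* = 1, and AB ≠ BA. (Witnesses: A = σ₁/√2 and B = σ₂/√2, where σ₁ = [[0,1],[1,0]] and σ₂ = [[0,−i],[i,0]] are Pauli matrices. Consequently the C*-algebra QISO⁺(ℤ₄, {1,3}), defined by these relations, is noncommutative.) -/
/-- There exist self-adjoint `2 × 2` complex matrices `A`, `B` with
`A² + B² = 1`, `AB + BA = 0`, `A²B + B³ = B`, `B²A + A³ = A`, `AA* + BB* = 1` and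
`AB ≠ BA`.  (Witnesses: `A = σ₁/√2`, `B = σ₂/√2`; hence `QISO⁺(ℤ₄, {1,3})` is
noncommutative.) -/
theorem exists_noncommuting_qiso_Z4_relations :
    ∃ A B : Matrix (Fin 2) (Fin 2) ℂ,
      IsSelfAdjoint A ∧ IsSelfAdjoint B ∧
      A ^ 2 + B ^ 2 = 1 ∧
      A * B + B * A = 0 ∧
      A ^ 2 * B + B ^ 3 = B ∧
      B ^ 2 * A + A ^ 3 = A ∧
      A * star A + B * star B = 1 ∧
      A * B ≠ B * A := by
  set c : ℂ := (((Real.sqrt 2)⁻¹ : ℝ) : ℂ) with hcdef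
  have hc2 : c ^ 2 = 1 / 2 := by
    rw [hcdef]
    push_cast
    rw [inv_pow]
    norm_cast
    rw [Real.sq_sqrt (by norm_num : (0:ℝ) ≤ 2)]
    norm_num
  have hcs : star c = c := by
    rw [hcdef]; simp [Complex.star_def, Complex.conj_ofReal]
  set A : Matrix (Fin 2) (Fin 2) ℂ := !![0, c; c, 0] with hA
  set B : Matrix (Fin 2) (Fin 2) ℂ := !![0, -c * Complex.I; c * Complex.I, 0] with hB
  have hsA : IsSelfAdjoint A := by
    ext i j; fin_cases i <;> fin_cases j <;>
      simp [hA, Matrix.conjTranspose_apply, hcs]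
  have hsB : IsSelfAdjoint B := by
    ext i j; fin_cases i <;> fin_cases j <;>
      simp [hB, Matrix.conjTranspose_apply, hcs, Complex.star_def, map_mul]
  have hA2 : A ^ 2 = ((1/2 : ℂ)) • (1 : Matrix (Fin 2) (Fin 2) ℂ) := by
    ext i j; fin_cases i <;> fin_cases j <;>
      simp [hA, pow_two, Matrix.mul_apply, Fin.sum_univ_two, Matrix.one_apply] <;>
      linear_combination hc2
  have hB2 : B ^ 2 = ((1/2 : ℂ)) • (1 : Matrix (Fin 2) (Fin 2) ℂ) := by
    ext i j; fin_cases i <;> fin_cases j <;>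
      simp [hB, pow_two, Matrix.mul_apply, Fin.sum_univ_two, Matrix.one_apply] <;>
      linear_combination (-(c^2)) * Complex.I_sq + hc2
  have hAB : A * B + B * A = 0 := by
    ext i j; fin_cases i <;> fin_cases j <;>
      simp [hA, hB, Matrix.mul_apply, Fin.sum_univ_two] <;> ring
  have sq : A ^ 2 + B ^ 2 = 1 := by
    rw [hA2, hB2, ← add_smul]; norm_num
  refine ⟨A, B, hsA, hsB, sq, hAB, ?_, ?_, ?_, ?_⟩
  · rw [pow_succ B 2, hA2, hB2, Matrix.smul_mul, one_mul, ← add_smul]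
    norm_num
  · rw [pow_succ A 2, hB2, hA2, Matrix.smul_mul, one_mul, ← add_smul]
    norm_num
  · rw [hsA.star_eq, hsB.star_eq, ← pow_two, ← pow_two]
    exact sq
  · intro h
    have h00 := congrFun (congrFun h 0) 0
    simp [hA, hB, Matrix.mul_apply, Fin.sum_univ_two] at h00
    have hc20 : c ^ 2 * Complex.I = 0 := by linear_combination h00 / 2
    rw [hc2] at hc20
    simp [Complex.I_ne_zero] at hc20
end

section
/- Let 𝒜 be a unital C*-algebra and A, B, C, D ∈ 𝒜 self-adjoint elements satisfying A² + B² = 1, C² + D² = 1, AB = BA = 0, CD = DC = 0, and AC + BD = 0. Then A², B², C², D² are projections, C² = B², and D² = A². -/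
/-- In a unital C*-algebra, let `A, B, C, D` be self-adjoint with
`A² + B² = 1`, `C² + D² = 1`, `AB = BA = 0`, `CD = DC = 0` and `AC + BD = 0`.
Then `A², B², C², D²` are projections, `C² = B²` and `D² = A²`.
(Relations for `QISO⁺(S₃)` with the generating set of two transpositions.) -/
theorem qiso_S3_transpositions_projections
    {𝒜 : Type*} [NormedRing 𝒜] [StarRing 𝒜] [CStarRing 𝒜] [CompleteSpace 𝒜]
    [NormedAlgebra ℂ 𝒜] [StarModule ℂ 𝒜]
    (A B C D : 𝒜)
    (hA : star A = A) (hB : star B = B) (hC : star C = C) (hD : star D = D)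
    (h1 : A ^ 2 + B ^ 2 = 1) (h2 : C ^ 2 + D ^ 2 = 1)
    (h3 : A * B = 0) (h4 : B * A = 0)
    (h5 : C * D = 0) (h6 : D * C = 0)
    (h7 : A * C + B * D = 0) :
    (star (A ^ 2) = A ^ 2 ∧ A ^ 2 * A ^ 2 = A ^ 2) ∧
    (star (B ^ 2) = B ^ 2 ∧ B ^ 2 * B ^ 2 = B ^ 2) ∧
    (star (C ^ 2) = C ^ 2 ∧ C ^ 2 * C ^ 2 = C ^ 2) ∧
    (star (D ^ 2) = D ^ 2 ∧ D ^ 2 * D ^ 2 = D ^ 2) ∧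
    C ^ 2 = B ^ 2 ∧ D ^ 2 = A ^ 2 := by
  have sq0 : ∀ X Y : 𝒜, X * Y = 0 → X ^ 2 * Y ^ 2 = 0 := by
    intro X Y h
    rw [pow_two, pow_two, mul_assoc, ← mul_assoc X Y Y, h, zero_mul, mul_zero]
  have idem : ∀ X Y : 𝒜, X ^ 2 + Y ^ 2 = 1 → X * Y = 0 → X ^ 2 * X ^ 2 = X ^ 2 := by
    intro X Y h hxy
    have e : X ^ 2 * (X ^ 2 + Y ^ 2) = X ^ 2 := by rw [h, mul_one]
    rwa [mul_add, sq0 X Y hxy, add_zero] at e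
  have idem' : ∀ X Y : 𝒜, X ^ 2 + Y ^ 2 = 1 → Y * X = 0 → Y ^ 2 * Y ^ 2 = Y ^ 2 := by
    intro X Y h hyx
    exact idem Y X (by rw [add_comm] at h; exact h) hyx
  -- A² C = 0
  have hA2C : A ^ 2 * C = 0 := by
    have e := congrArg (fun x => A * x) h7
    simp only [mul_add, mul_zero, ← mul_assoc, h3, zero_mul, add_zero] at e
    rw [pow_two, e]
  -- B² D = 0
  have hB2D : B ^ 2 * D = 0 := by
    have e := congrArg (fun x => B * x) h7
    simp only [mul_add, mul_zero, ← mul_assoc, h4, zero_mul, zero_add] at e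
    rw [pow_two, e]
  have hA2C2 : A ^ 2 * C ^ 2 = 0 := by
    rw [pow_two C, ← mul_assoc, hA2C, zero_mul]
  have hB2D2 : B ^ 2 * D ^ 2 = 0 := by
    rw [pow_two D, ← mul_assoc, hB2D, zero_mul]
  have hC2 : C ^ 2 = B ^ 2 * C ^ 2 := by
    calc C ^ 2 = (A ^ 2 + B ^ 2) * C ^ 2 := by rw [h1, one_mul]
    _ = A ^ 2 * C ^ 2 + B ^ 2 * C ^ 2 := add_mul _ _ _
    _ = B ^ 2 * C ^ 2 := by rw [hA2C2, zero_add]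
  have hB2 : B ^ 2 = B ^ 2 * C ^ 2 := by
    calc B ^ 2 = B ^ 2 * (C ^ 2 + D ^ 2) := by rw [h2, mul_one]
    _ = B ^ 2 * C ^ 2 + B ^ 2 * D ^ 2 := mul_add _ _ _
    _ = B ^ 2 * C ^ 2 := by rw [hB2D2, add_zero]
  have hCB : C ^ 2 = B ^ 2 := by rw [hC2, ← hB2]
  have hD2 : D ^ 2 = A ^ 2 * D ^ 2 := by
    calc D ^ 2 = (A ^ 2 + B ^ 2) * D ^ 2 := by rw [h1, one_mul]
    _ = A ^ 2 * D ^ 2 + B ^ 2 * D ^ 2 := add_mul _ _ _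
    _ = A ^ 2 * D ^ 2 := by rw [hB2D2, add_zero]
  have hA2 : A ^ 2 = A ^ 2 * D ^ 2 := by
    calc A ^ 2 = A ^ 2 * (C ^ 2 + D ^ 2) := by rw [h2, mul_one]
    _ = A ^ 2 * C ^ 2 + A ^ 2 * D ^ 2 := mul_add _ _ _
    _ = A ^ 2 * D ^ 2 := by rw [hA2C2, zero_add]
  have hDA : D ^ 2 = A ^ 2 := by rw [hD2, ← hA2]
  refine ⟨⟨?_, idem A B h1 h3⟩, ⟨?_, idem' A B h1 h4⟩,
    ⟨?_, idem C D h2 h5⟩, ⟨?_, idem' C D h2 h6⟩, hCB, hDA⟩ <;>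
    simp [pow_two, star_mul, hA, hB, hC, hD]
end

section
/- Let 𝒜 be a unital C*-algebra and A, B, C, D ∈ 𝒜 self-adjoint elements satisfying A² + B² = 1, C² + D² = 1, AB = BA = 0, CD = DC = 0, AC + BD = 0, CA + DB = 0, and DAD + CBC = ADA + BCB. Then DAD = ADA and CBC = BCB. -/
/-- In a unital C*-algebra, let `A, B, C, D` be self-adjoint with
`A² + B² = 1`, `C² + D² = 1`, `AB = BA = 0`, `CD = DC = 0`, `AC + BD = 0`,
`CA + DB = 0` and `DAD + CBC = ADA + BCB`. Then `DAD = ADA` and `CBC = BCB`.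
(Splitting of the braid-type relation coming from `tst = sts` in `S₃`.) -/
theorem qiso_S3_braid_relation_splits
    {𝒜 : Type*} [NormedRing 𝒜] [StarRing 𝒜] [CStarRing 𝒜] [CompleteSpace 𝒜]
    [NormedAlgebra ℂ 𝒜] [StarModule ℂ 𝒜]
    (A B C D : 𝒜)
    (hA : star A = A) (hB : star B = B) (hC : star C = C) (hD : star D = D)
    (h1 : A ^ 2 + B ^ 2 = 1) (h2 : C ^ 2 + D ^ 2 = 1)
    (h3 : A * B = 0) (h4 : B * A = 0)
    (h5 : C * D = 0) (h6 : D * C = 0)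
    (h7 : A * C + B * D = 0) (h8 : C * A + D * B = 0)
    (h9 : D * A * D + C * B * C = A * D * A + B * C * B) :
    D * A * D = A * D * A ∧ C * B * C = B * C * B := by
  have hAC : A * C = -(B * D) := eq_neg_of_add_eq_zero_left h7
  have hCA : C * A = -(D * B) := eq_neg_of_add_eq_zero_left h8
  have hBD : B * D = -(A * C) := eq_neg_of_add_eq_zero_right h7
  have hDB : D * B = -(C * A) := eq_neg_of_add_eq_zero_right h8
  set X := D * A * D - A * D * A with hXdef
  set Y := C * B * C - B * C * B with hYdef
  have hYX' : Y = -X := by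
    rw [hXdef, hYdef, neg_sub, sub_eq_sub_iff_add_eq_add, add_comm (C*B*C)]
    exact h9
  -- the four products for X*Y
  have t1 : (D*A*D) * (C*B*C) = 0 := by
    calc (D*A*D) * (C*B*C) = D*A*(D*C)*(B*C) := by noncomm_ring
      _ = 0 := by rw [h6]; noncomm_ring
  have t2 : (D*A*D) * (B*C*B) = (C*A)^3 := by
    calc (D*A*D) * (B*C*B) = D*A*(D*B)*(C*B) := by noncomm_ring
      _ = D*A*(-(C*A))*(C*B) := by rw [hDB]
      _ = -(D*(A*C)*(A*C)*B) := by noncomm_ring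
      _ = -(D*(-(B*D))*(-(B*D))*B) := by rw [hAC]
      _ = -((D*B)*((D*B)*(D*B))) := by noncomm_ring
      _ = -((-(C*A))*((-(C*A))*(-(C*A)))) := by rw [hDB]
      _ = (C*A)^3 := by noncomm_ring
  have t3 : (A*D*A) * (C*B*C) = (B*D)^3 := by
    calc (A*D*A) * (C*B*C) = A*D*(A*C)*(B*C) := by noncomm_ring
      _ = A*D*(-(B*D))*(B*C) := by rw [hAC]
      _ = -(A*(D*B)*(D*B)*C) := by noncomm_ring
      _ = -(A*(-(C*A))*(-(C*A))*C) := by rw [hDB]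
      _ = -((A*C)*((A*C)*(A*C))) := by noncomm_ring
      _ = -((-(B*D))*((-(B*D))*(-(B*D)))) := by rw [hAC]
      _ = (B*D)^3 := by noncomm_ring
  have t4 : (A*D*A) * (B*C*B) = 0 := by
    calc (A*D*A) * (B*C*B) = A*D*(A*B)*(C*B) := by noncomm_ring
      _ = 0 := by rw [h3]; noncomm_ring
  have hXY : X * Y = -((C*A)^3 + (B*D)^3) := by
    have e : X * Y = (D*A*D)*(C*B*C) - (D*A*D)*(B*C*B) - (A*D*A)*(C*B*C)
        + (A*D*A)*(B*C*B) := by rw [hXdef, hYdef]; noncomm_ring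
    rw [e, t1, t2, t3, t4]; noncomm_ring
  -- the four products for Y*X
  have u1 : (C*B*C) * (D*A*D) = 0 := by
    calc (C*B*C) * (D*A*D) = C*B*(C*D)*(A*D) := by noncomm_ring
      _ = 0 := by rw [h5]; noncomm_ring
  have u2 : (C*B*C) * (A*D*A) = -((C*A)^3) := by
    calc (C*B*C) * (A*D*A) = C*B*(C*A)*(D*A) := by noncomm_ring
      _ = C*B*(-(D*B))*(D*A) := by rw [hCA]
      _ = -(C*(B*D)*(B*D)*A) := by noncomm_ring
      _ = -(C*(-(A*C))*(-(A*C))*A) := by rw [hBD]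
      _ = -((C*A)*((C*A)*(C*A))) := by noncomm_ring
      _ = -((C*A)^3) := by noncomm_ring
  have u3 : (B*C*B) * (D*A*D) = -((B*D)^3) := by
    calc (B*C*B) * (D*A*D) = B*C*(B*D)*(A*D) := by noncomm_ring
      _ = B*C*(-(A*C))*(A*D) := by rw [hBD]
      _ = -(B*(C*A)*(C*A)*D) := by noncomm_ring
      _ = -(B*(-(D*B))*(-(D*B))*D) := by rw [hCA]
      _ = -((B*D)*((B*D)*(B*D))) := by noncomm_ring
      _ = -((B*D)^3) := by noncomm_ring
  have u4 : (B*C*B) * (A*D*A) = 0 := by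
    calc (B*C*B) * (A*D*A) = B*C*(B*A)*(D*A) := by noncomm_ring
      _ = 0 := by rw [h4]; noncomm_ring
  have hYXval : Y * X = (C*A)^3 + (B*D)^3 := by
    have e : Y * X = (C*B*C)*(D*A*D) - (C*B*C)*(A*D*A) - (B*C*B)*(D*A*D)
        + (B*C*B)*(A*D*A) := by rw [hXdef, hYdef]; noncomm_ring
    rw [e, u1, u2, u3, u4]; noncomm_ring
  -- X² = 0
  have hXX1 : X * X = (C*A)^3 + (B*D)^3 := by
    calc X * X = -(X * Y) := by rw [hYX']; noncomm_ring
      _ = (C*A)^3 + (B*D)^3 := by rw [hXY]; noncomm_ring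
  have hXX2 : X * X = -((C*A)^3 + (B*D)^3) := by
    calc X * X = -(Y * X) := by rw [hYX']; noncomm_ring
      _ = -((C*A)^3 + (B*D)^3) := by rw [hYXval]
  have hXX0 : X * X = 0 := by
    have h2smul : (2 : ℂ) • (X * X) = 0 := by
      rw [two_smul]
      nth_rewrite 1 [hXX1]
      rw [hXX2]
      abel
    have := smul_eq_zero.mp h2smul
    rcases this with h | h
    · norm_num at h
    · exact h
  -- X is self-adjoint
  have hXstar : star X = X := by
    rw [hXdef]
    simp [star_sub, star_mul, hA, hD, mul_assoc]
  have hX0 : X = 0 := by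
    have : star X * X = 0 := by rw [hXstar, hXX0]
    exact CStarRing.star_mul_self_eq_zero_iff X |>.mp this
  constructor
  · exact sub_eq_zero.mp hX0
  · have : Y = 0 := by rw [hYX', hX0, neg_zero]
    exact sub_eq_zero.mp this
end

section
/- Let 𝒜 be a unital C*-algebra and A, B, C, D, E, F, G, H ∈ 𝒜. Suppose the 4×4 matrix U = [[A, B, C, D], [B*, A*, D*, C*], [E, F, G, H], [F*, E*, H*, G*]] over 𝒜 is unitary (U U* = U* U = 1, where U* is the conjugate-transpose), and suppose x y* = 0 and x* y = 0 for every pair of distinct elements x ≠ y from {A, B, C, D}, and likewise for every pair of distinct elements from {E, F, G, H}. Then the 4×4 matrix M = [[AA*, BB*, CC*, DD*], [EE*, FF*, GG*, HH*], [B*B, A*A, D*D, C*C], [F*F, E*E, H*H, G*G]] is a magic unitary: every entry of M is a projection, and the entries of each row and of each column of M sum to 1. -/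
/-- The fundamental `4 × 4` matrix `U = [[A,B,C,D],[B*,A*,D*,C*],[E,F,G,H],[F*,E*,H*,G*]]`
appearing in the computation of `QISO⁺(𝔽₂, S)`. -/
def fundamentalMatrix {𝒜 : Type*} [Ring 𝒜] [StarRing 𝒜] (A B C D E F G H : 𝒜) :
    Matrix (Fin 4) (Fin 4) 𝒜 :=
  !![A, B, C, D;
     star B, star A, star D, star C;
     E, F, G, H;
     star F, star E, star H, star G]

/-- The `4 × 4` matrix `M` of range and initial projections
`[[AA*,BB*,CC*,DD*],[EE*,FF*,GG*,HH*],[B*B,A*A,D*D,C*C],[F*F,E*E,H*H,G*G]]`. -/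
def projectionMatrix {𝒜 : Type*} [Ring 𝒜] [StarRing 𝒜] (A B C D E F G H : 𝒜) :
    Matrix (Fin 4) (Fin 4) 𝒜 :=
  !![A * star A, B * star B, C * star C, D * star D;
     E * star E, F * star F, G * star G, H * star H;
     star B * B, star A * A, star D * D, star C * C;
     star F * F, star E * E, star H * H, star G * G]

private lemma key_aux {𝒜 : Type*} [Ring 𝒜] [StarRing 𝒜] (A B C D : 𝒜)
    (hsum : A * star A + B * star B + C * star C + D * star D = 1)
    (h1 : star B * A = 0) (h2 : star C * A = 0) (h3 : star D * A = 0) :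
    A * star A * A = A := by
  have := congrArg (· * A) hsum
  simpa [add_mul, mul_assoc, h1, h2, h3] using this

private lemma proj_range {𝒜 : Type*} [Ring 𝒜] [StarRing 𝒜] (x : 𝒜)
    (hx : x * star x * x = x) :
    star (x * star x) = x * star x ∧ (x * star x) * (x * star x) = x * star x := by
  refine ⟨by simp, ?_⟩
  rw [show (x * star x) * (x * star x) = (x * star x * x) * star x from by noncomm_ring, hx]

private lemma proj_init {𝒜 : Type*} [Ring 𝒜] [StarRing 𝒜] (x : 𝒜)
    (hx : x * star x * x = x) :
    star (star x * x) = star x * x ∧ (star x * x) * (star x * x) = star x * x := by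
  refine ⟨by simp, ?_⟩
  rw [show (star x * x) * (star x * x) = star x * (x * star x * x) from by noncomm_ring, hx]

/-- Let `𝒜` be a unital C*-algebra and `A, …, H ∈ 𝒜`. Suppose the
matrix `U = [[A,B,C,D],[B*,A*,D*,C*],[E,F,G,H],[F*,E*,H*,G*]]` is unitary and that
`xy* = 0` and `x*y = 0` for every pair of distinct elements among `{A,B,C,D}` and
likewise among `{E,F,G,H}`. Then
`M = [[AA*,BB*,CC*,DD*],[EE*,FF*,GG*,HH*],[B*B,A*A,D*D,C*C],[F*F,E*E,H*H,G*G]]`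
is a magic unitary: every entry is a projection, and every row and every column of `M`
sums to `1`. (Key structure of `QISO⁺(𝔽₂, S)`, Theorem 5.1.) -/
theorem qiso_free_group_magic_unitary
    {𝒜 : Type*} [NormedRing 𝒜] [StarRing 𝒜] [CStarRing 𝒜] [CompleteSpace 𝒜]
    [NormedAlgebra ℂ 𝒜] [StarModule ℂ 𝒜]
    (A B C D E F G H : 𝒜)
    (hU1 : fundamentalMatrix A B C D E F G H * star (fundamentalMatrix A B C D E F G H) = 1)
    (hU2 : star (fundamentalMatrix A B C D E F G H) * fundamentalMatrix A B C D E F G H = 1)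
    (horth1 : ∀ i j : Fin 4, i ≠ j →
      (![A, B, C, D] i) * star (![A, B, C, D] j) = 0 ∧
      star (![A, B, C, D] i) * (![A, B, C, D] j) = 0)
    (horth2 : ∀ i j : Fin 4, i ≠ j →
      (![E, F, G, H] i) * star (![E, F, G, H] j) = 0 ∧
      star (![E, F, G, H] i) * (![E, F, G, H] j) = 0) :
    (∀ i j : Fin 4,
      star (projectionMatrix A B C D E F G H i j) = projectionMatrix A B C D E F G H i j ∧
      projectionMatrix A B C D E F G H i j * projectionMatrix A B C D E F G H i j =
        projectionMatrix A B C D E F G H i j) ∧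
    (∀ i : Fin 4, ∑ j : Fin 4, projectionMatrix A B C D E F G H i j = 1) ∧
    (∀ j : Fin 4, ∑ i : Fin 4, projectionMatrix A B C D E F G H i j = 1) := by
  have oBA : star B * A = 0 := by
    simpa only [Matrix.cons_val_zero, Matrix.cons_val_one, Matrix.head_cons]
      using (horth1 1 0 (by decide)).2
  have oCA : star C * A = 0 := by
    simpa only [Matrix.cons_val_zero, Matrix.cons_val_two, Matrix.tail_cons, Matrix.head_cons]
      using (horth1 2 0 (by decide)).2
  have oDA : star D * A = 0 := by
    simpa only [Matrix.cons_val_zero, Matrix.cons_val_three, Matrix.tail_cons, Matrix.head_cons]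
      using (horth1 3 0 (by decide)).2
  have oAB : star A * B = 0 := by
    simpa only [Matrix.cons_val_zero, Matrix.cons_val_one, Matrix.head_cons]
      using (horth1 0 1 (by decide)).2
  have oCB : star C * B = 0 := by
    simpa only [Matrix.cons_val_zero, Matrix.cons_val_one, Matrix.cons_val_two, Matrix.tail_cons, Matrix.head_cons]
      using (horth1 2 1 (by decide)).2
  have oDB : star D * B = 0 := by
    simpa only [Matrix.cons_val_zero, Matrix.cons_val_one, Matrix.cons_val_three, Matrix.tail_cons, Matrix.head_cons]
      using (horth1 3 1 (by decide)).2
  have oAC : star A * C = 0 := by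
    simpa only [Matrix.cons_val_zero, Matrix.cons_val_two, Matrix.tail_cons, Matrix.head_cons]
      using (horth1 0 2 (by decide)).2
  have oBC : star B * C = 0 := by
    simpa only [Matrix.cons_val_zero, Matrix.cons_val_one, Matrix.cons_val_two, Matrix.tail_cons, Matrix.head_cons]
      using (horth1 1 2 (by decide)).2
  have oDC : star D * C = 0 := by
    simpa only [Matrix.cons_val_two, Matrix.cons_val_three, Matrix.tail_cons, Matrix.head_cons]
      using (horth1 3 2 (by decide)).2
  have oAD : star A * D = 0 := by
    simpa only [Matrix.cons_val_zero, Matrix.cons_val_three, Matrix.tail_cons, Matrix.head_cons]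
      using (horth1 0 3 (by decide)).2
  have oBD : star B * D = 0 := by
    simpa only [Matrix.cons_val_zero, Matrix.cons_val_one, Matrix.cons_val_three, Matrix.tail_cons, Matrix.head_cons]
      using (horth1 1 3 (by decide)).2
  have oCD : star C * D = 0 := by
    simpa only [Matrix.cons_val_two, Matrix.cons_val_three, Matrix.tail_cons, Matrix.head_cons]
      using (horth1 2 3 (by decide)).2
  have oFE : star F * E = 0 := by
    simpa only [Matrix.cons_val_zero, Matrix.cons_val_one, Matrix.head_cons]
      using (horth2 1 0 (by decide)).2
  have oGE : star G * E = 0 := by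
    simpa only [Matrix.cons_val_zero, Matrix.cons_val_two, Matrix.tail_cons, Matrix.head_cons]
      using (horth2 2 0 (by decide)).2
  have oHE : star H * E = 0 := by
    simpa only [Matrix.cons_val_zero, Matrix.cons_val_three, Matrix.tail_cons, Matrix.head_cons]
      using (horth2 3 0 (by decide)).2
  have oEF : star E * F = 0 := by
    simpa only [Matrix.cons_val_zero, Matrix.cons_val_one, Matrix.head_cons]
      using (horth2 0 1 (by decide)).2
  have oGF : star G * F = 0 := by
    simpa only [Matrix.cons_val_zero, Matrix.cons_val_one, Matrix.cons_val_two, Matrix.tail_cons, Matrix.head_cons]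
      using (horth2 2 1 (by decide)).2
  have oHF : star H * F = 0 := by
    simpa only [Matrix.cons_val_zero, Matrix.cons_val_one, Matrix.cons_val_three, Matrix.tail_cons, Matrix.head_cons]
      using (horth2 3 1 (by decide)).2
  have oEG : star E * G = 0 := by
    simpa only [Matrix.cons_val_zero, Matrix.cons_val_two, Matrix.tail_cons, Matrix.head_cons]
      using (horth2 0 2 (by decide)).2
  have oFG : star F * G = 0 := by
    simpa only [Matrix.cons_val_zero, Matrix.cons_val_one, Matrix.cons_val_two, Matrix.tail_cons, Matrix.head_cons]
      using (horth2 1 2 (by decide)).2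
  have oHG : star H * G = 0 := by
    simpa only [Matrix.cons_val_two, Matrix.cons_val_three, Matrix.tail_cons, Matrix.head_cons]
      using (horth2 3 2 (by decide)).2
  have oEH : star E * H = 0 := by
    simpa only [Matrix.cons_val_zero, Matrix.cons_val_three, Matrix.tail_cons, Matrix.head_cons]
      using (horth2 0 3 (by decide)).2
  have oFH : star F * H = 0 := by
    simpa only [Matrix.cons_val_zero, Matrix.cons_val_one, Matrix.cons_val_three, Matrix.tail_cons, Matrix.head_cons]
      using (horth2 1 3 (by decide)).2
  have oGH : star G * H = 0 := by
    simpa only [Matrix.cons_val_two, Matrix.cons_val_three, Matrix.tail_cons, Matrix.head_cons]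
      using (horth2 2 3 (by decide)).2
  have r0 : A * star A + B * star B + C * star C + D * star D = 1 := by
    have := congrFun (congrFun hU1 0) 0
    simpa only [fundamentalMatrix, Matrix.mul_apply, Fin.sum_univ_four, Matrix.star_apply,
      Matrix.one_apply_eq, star_star, Matrix.cons_val', Matrix.cons_val_zero, Matrix.cons_val_one,
      Matrix.head_cons, Matrix.empty_val', Matrix.cons_val_fin_one, Matrix.head_fin_const,
      Matrix.cons_val_two, Matrix.cons_val_three, Matrix.tail_cons, Matrix.of_apply,
      add_assoc] using this
  have r1 : star B * B + star A * A + star D * D + star C * C = 1 := by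
    have := congrFun (congrFun hU1 1) 1
    simpa only [fundamentalMatrix, Matrix.mul_apply, Fin.sum_univ_four, Matrix.star_apply,
      Matrix.one_apply_eq, star_star, Matrix.cons_val', Matrix.cons_val_zero, Matrix.cons_val_one,
      Matrix.head_cons, Matrix.empty_val', Matrix.cons_val_fin_one, Matrix.head_fin_const,
      Matrix.cons_val_two, Matrix.cons_val_three, Matrix.tail_cons, Matrix.of_apply,
      add_assoc] using this
  have r2 : E * star E + F * star F + G * star G + H * star H = 1 := by
    have := congrFun (congrFun hU1 2) 2
    simpa only [fundamentalMatrix, Matrix.mul_apply, Fin.sum_univ_four, Matrix.star_apply,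
      Matrix.one_apply_eq, star_star, Matrix.cons_val', Matrix.cons_val_zero, Matrix.cons_val_one,
      Matrix.head_cons, Matrix.empty_val', Matrix.cons_val_fin_one, Matrix.head_fin_const,
      Matrix.cons_val_two, Matrix.cons_val_three, Matrix.tail_cons, Matrix.of_apply,
      add_assoc] using this
  have r3 : star F * F + star E * E + star H * H + star G * G = 1 := by
    have := congrFun (congrFun hU1 3) 3
    simpa only [fundamentalMatrix, Matrix.mul_apply, Fin.sum_univ_four, Matrix.star_apply,
      Matrix.one_apply_eq, star_star, Matrix.cons_val', Matrix.cons_val_zero, Matrix.cons_val_one,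
      Matrix.head_cons, Matrix.empty_val', Matrix.cons_val_fin_one, Matrix.head_fin_const,
      Matrix.cons_val_two, Matrix.cons_val_three, Matrix.tail_cons, Matrix.of_apply,
      add_assoc] using this
  have c0 : star A * A + B * star B + star E * E + F * star F = 1 := by
    have := congrFun (congrFun hU2 0) 0
    simpa only [fundamentalMatrix, Matrix.mul_apply, Fin.sum_univ_four, Matrix.star_apply,
      Matrix.one_apply_eq, star_star, Matrix.cons_val', Matrix.cons_val_zero, Matrix.cons_val_one,
      Matrix.head_cons, Matrix.empty_val', Matrix.cons_val_fin_one, Matrix.head_fin_const,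
      Matrix.cons_val_two, Matrix.cons_val_three, Matrix.tail_cons, Matrix.of_apply,
      add_assoc] using this
  have c1 : star B * B + A * star A + star F * F + E * star E = 1 := by
    have := congrFun (congrFun hU2 1) 1
    simpa only [fundamentalMatrix, Matrix.mul_apply, Fin.sum_univ_four, Matrix.star_apply,
      Matrix.one_apply_eq, star_star, Matrix.cons_val', Matrix.cons_val_zero, Matrix.cons_val_one,
      Matrix.head_cons, Matrix.empty_val', Matrix.cons_val_fin_one, Matrix.head_fin_const,
      Matrix.cons_val_two, Matrix.cons_val_three, Matrix.tail_cons, Matrix.of_apply,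
      add_assoc] using this
  have c2 : star C * C + D * star D + star G * G + H * star H = 1 := by
    have := congrFun (congrFun hU2 2) 2
    simpa only [fundamentalMatrix, Matrix.mul_apply, Fin.sum_univ_four, Matrix.star_apply,
      Matrix.one_apply_eq, star_star, Matrix.cons_val', Matrix.cons_val_zero, Matrix.cons_val_one,
      Matrix.head_cons, Matrix.empty_val', Matrix.cons_val_fin_one, Matrix.head_fin_const,
      Matrix.cons_val_two, Matrix.cons_val_three, Matrix.tail_cons, Matrix.of_apply,
      add_assoc] using this
  have c3 : star D * D + C * star C + star H * H + G * star G = 1 := by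
    have := congrFun (congrFun hU2 3) 3
    simpa only [fundamentalMatrix, Matrix.mul_apply, Fin.sum_univ_four, Matrix.star_apply,
      Matrix.one_apply_eq, star_star, Matrix.cons_val', Matrix.cons_val_zero, Matrix.cons_val_one,
      Matrix.head_cons, Matrix.empty_val', Matrix.cons_val_fin_one, Matrix.head_fin_const,
      Matrix.cons_val_two, Matrix.cons_val_three, Matrix.tail_cons, Matrix.of_apply,
      add_assoc] using this
  have kA : A * star A * A = A := key_aux A B C D r0 oBA oCA oDA
  have kB : B * star B * B = B := key_aux B A C D (by rw [← r0]; abel) oAB oCB oDB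
  have kC : C * star C * C = C := key_aux C A B D (by rw [← r0]; abel) oAC oBC oDC
  have kD : D * star D * D = D := key_aux D A B C (by rw [← r0]; abel) oAD oBD oCD
  have kE : E * star E * E = E := key_aux E F G H r2 oFE oGE oHE
  have kF : F * star F * F = F := key_aux F E G H (by rw [← r2]; abel) oEF oGF oHF
  have kG : G * star G * G = G := key_aux G E F H (by rw [← r2]; abel) oEG oFG oHG
  have kH : H * star H * H = H := key_aux H E F G (by rw [← r2]; abel) oEH oFH oGH
  refine ⟨?_, ?_, ?_⟩
  · intro i j
    fin_cases i <;> fin_cases j <;>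
      simp only [projectionMatrix, Matrix.cons_val', Matrix.cons_val_zero, Matrix.cons_val_one,
        Matrix.head_cons, Matrix.empty_val', Matrix.cons_val_fin_one, Matrix.head_fin_const,
        Matrix.cons_val_two, Matrix.cons_val_three, Matrix.tail_cons, Matrix.of_apply,
        Fin.mk_zero, Fin.mk_one, Fin.isValue] <;>
      first
        | exact proj_range A kA | exact proj_range B kB | exact proj_range C kC
        | exact proj_range D kD | exact proj_range E kE | exact proj_range F kF
        | exact proj_range G kG | exact proj_range H kH
        | exact proj_init A kA | exact proj_init B kB | exact proj_init C kC
        | exact proj_init D kD | exact proj_init E kE | exact proj_init F kF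
        | exact proj_init G kG | exact proj_init H kH
  · intro i
    fin_cases i <;>
      simp only [projectionMatrix, Fin.sum_univ_four, Matrix.cons_val', Matrix.cons_val_zero,
        Matrix.cons_val_one, Matrix.head_cons, Matrix.empty_val', Matrix.cons_val_fin_one,
        Matrix.head_fin_const, Matrix.cons_val_two, Matrix.cons_val_three, Matrix.tail_cons,
        Matrix.of_apply, Fin.mk_zero, Fin.mk_one, Fin.isValue]
    exacts [r0, r2, r1, r3]
  · intro j
    fin_cases j <;>
      simp only [projectionMatrix, Fin.sum_univ_four, Matrix.cons_val', Matrix.cons_val_zero,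
        Matrix.cons_val_one, Matrix.head_cons, Matrix.empty_val', Matrix.cons_val_fin_one,
        Matrix.head_fin_const, Matrix.cons_val_two, Matrix.cons_val_three, Matrix.tail_cons,
        Matrix.of_apply, Fin.mk_zero, Fin.mk_one, Fin.isValue, show ((⟨2, by norm_num⟩ : Fin 4)) = 2 from rfl,
        show ((⟨3, by norm_num⟩ : Fin 4)) = 3 from rfl]
    · rw [← c1]; abel
    · rw [← c0]; abel
    · rw [← c3]; abel
    · rw [← c2]; abel
end

section
/- Let 𝒜 be a unital C*-algebra and A, B, C, D, E, F, G, H ∈ 𝒜 partial isometries (x x* x = x for each of them) such that the 4×4 matrix M = [[AA*, BB*, CC*, DD*], [EE*, FF*, GG*, HH*], [B*B, A*A, D*D, C*C], [F*F, E*E, H*H, G*G]] has every row and every column summing to 1. Then the 4×4 matrix U = [[A, B, C, D], [B*, A*, D*, C*], [E, F, G, H], [F*, E*, H*, G*]] is unitary (U U* = U* U = 1), and moreover x y* = 0 and x* y = 0 for every pair of distinct elements x ≠ y from {A, B, C, D}, and likewise for every pair of distinct elements from {E, F, G, H}. -/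
section Aux

set_option maxHeartbeats 1000000 in
private theorem mul_fin_four' {α : Type*} [AddCommMonoid α] [Mul α]
    (a₁₁ a₁₂ a₁₃ a₁₄ a₂₁ a₂₂ a₂₃ a₂₄ a₃₁ a₃₂ a₃₃ a₃₄ a₄₁ a₄₂ a₄₃ a₄₄
     b₁₁ b₁₂ b₁₃ b₁₄ b₂₁ b₂₂ b₂₃ b₂₄ b₃₁ b₃₂ b₃₃ b₃₄ b₄₁ b₄₂ b₄₃ b₄₄ : α) :
    !![a₁₁, a₁₂, a₁₃, a₁₄;
       a₂₁, a₂₂, a₂₃, a₂₄;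
       a₃₁, a₃₂, a₃₃, a₃₄;
       a₄₁, a₄₂, a₄₃, a₄₄] * !![b₁₁, b₁₂, b₁₃, b₁₄;
                                b₂₁, b₂₂, b₂₃, b₂₄;
                                b₃₁, b₃₂, b₃₃, b₃₄;
                                b₄₁, b₄₂, b₄₃, b₄₄] =
    !![a₁₁*b₁₁ + a₁₂*b₂₁ + a₁₃*b₃₁ + a₁₄*b₄₁, a₁₁*b₁₂ + a₁₂*b₂₂ + a₁₃*b₃₂ + a₁₄*b₄₂,
         a₁₁*b₁₃ + a₁₂*b₂₃ + a₁₃*b₃₃ + a₁₄*b₄₃, a₁₁*b₁₄ + a₁₂*b₂₄ + a₁₃*b₃₄ + a₁₄*b₄₄;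
       a₂₁*b₁₁ + a₂₂*b₂₁ + a₂₃*b₃₁ + a₂₄*b₄₁, a₂₁*b₁₂ + a₂₂*b₂₂ + a₂₃*b₃₂ + a₂₄*b₄₂,
         a₂₁*b₁₃ + a₂₂*b₂₃ + a₂₃*b₃₃ + a₂₄*b₄₃, a₂₁*b₁₄ + a₂₂*b₂₄ + a₂₃*b₃₄ + a₂₄*b₄₄;
       a₃₁*b₁₁ + a₃₂*b₂₁ + a₃₃*b₃₁ + a₃₄*b₄₁, a₃₁*b₁₂ + a₃₂*b₂₂ + a₃₃*b₃₂ + a₃₄*b₄₂,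
         a₃₁*b₁₃ + a₃₂*b₂₃ + a₃₃*b₃₃ + a₃₄*b₄₃, a₃₁*b₁₄ + a₃₂*b₂₄ + a₃₃*b₃₄ + a₃₄*b₄₄;
       a₄₁*b₁₁ + a₄₂*b₂₁ + a₄₃*b₃₁ + a₄₄*b₄₁, a₄₁*b₁₂ + a₄₂*b₂₂ + a₄₃*b₃₂ + a₄₄*b₄₂,
         a₄₁*b₁₃ + a₄₂*b₂₃ + a₄₃*b₃₃ + a₄₄*b₄₃, a₄₁*b₁₄ + a₄₂*b₂₄ + a₄₃*b₃₄ + a₄₄*b₄₄] := by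
  ext i j
  fin_cases i <;> fin_cases j
    <;> simp [Matrix.mul_apply, Fin.sum_univ_succ, ← add_assoc]

private theorem one_fin_four' {α : Type*} [Zero α] [One α] :
    (1 : Matrix (Fin 4) (Fin 4) α) = !![1,0,0,0; 0,1,0,0; 0,0,1,0; 0,0,0,1] := by
  ext i j
  fin_cases i <;> fin_cases j <;>
    simp [Matrix.one_apply, Matrix.vecHead, Matrix.vecTail]

private theorem star_fin_four' {α : Type*} [NonUnitalNonAssocSemiring α] [StarRing α]
    (a₁₁ a₁₂ a₁₃ a₁₄ a₂₁ a₂₂ a₂₃ a₂₄ a₃₁ a₃₂ a₃₃ a₃₄ a₄₁ a₄₂ a₄₃ a₄₄ : α) :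
    star !![a₁₁, a₁₂, a₁₃, a₁₄;
       a₂₁, a₂₂, a₂₃, a₂₄;
       a₃₁, a₃₂, a₃₃, a₃₄;
       a₄₁, a₄₂, a₄₃, a₄₄] =
    !![star a₁₁, star a₂₁, star a₃₁, star a₄₁;
       star a₁₂, star a₂₂, star a₃₂, star a₄₂;
       star a₁₃, star a₂₃, star a₃₃, star a₄₃;
       star a₁₄, star a₂₄, star a₃₄, star a₄₄] := by
  ext i j
  fin_cases i <;> fin_cases j <;> rfl

/-- If `x` absorbs `p` on the right, `y` absorbs `q` on the left and `p * q = 0`,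
then `x * y = 0`. -/
private theorem Zmul {𝒜 : Type*} [Ring 𝒜] {x y p q : 𝒜}
    (hx : x * p = x) (hy : q * y = y) (h : p * q = 0) : x * y = 0 := by
  rw [← hx, ← hy, mul_assoc, ← mul_assoc p, h, zero_mul, mul_zero]

/-- Four projections in a unital C*-algebra summing to `1` are pairwise orthogonal. -/
private theorem orth4' {𝒜 : Type*} [NormedRing 𝒜] [StarRing 𝒜] [CStarRing 𝒜] [CompleteSpace 𝒜]
    [NormedAlgebra ℂ 𝒜] [StarModule ℂ 𝒜] (p q r s : 𝒜)
    (hp : star p = p) (hp2 : p * p = p) (hq : star q = q) (hq2 : q * q = q)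
    (hr : star r = r) (hr2 : r * r = r) (hs : star s = s) (hs2 : s * s = s)
    (hsum : p + q + r + s = 1) : p * q = 0 := by
  letI : CStarAlgebra 𝒜 := {}
  letI := CStarAlgebra.spectralOrder 𝒜
  haveI := CStarAlgebra.spectralOrderedRing 𝒜
  have h3 : q * q * q = q := by rw [hq2, hq2]
  have h2 : q * p * q + q * q * q + q * r * q + q * s * q = q := by
    calc q * p * q + q * q * q + q * r * q + q * s * q = q * (p + q + r + s) * q := by
          noncomm_ring
      _ = q := by rw [hsum, mul_one, hq2]
  rw [h3] at h2
  have key : q * p * q + (q * r * q + q * s * q) = 0 := by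
    calc q * p * q + (q * r * q + q * s * q)
        = (q * p * q + q + (q * r * q + q * s * q)) - q := by abel
      _ = q - q := by
          rw [show q * p * q + q + (q * r * q + q * s * q)
                = q * p * q + q + q * r * q + q * s * q by abel, h2]
      _ = 0 := sub_self q
  have sq : ∀ x : 𝒜, star x = x → x * x = x → star (x * q) * (x * q) = q * x * q := by
    intro x hx hx2
    calc star (x * q) * (x * q) = (q * x) * (x * q) := by rw [star_mul, hx, hq]
      _ = q * (x * x) * q := by noncomm_ring
      _ = q * x * q := by rw [hx2]
  have n1 : (0:𝒜) ≤ q * p * q := (sq p hp hp2) ▸ star_mul_self_nonneg (p * q)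
  have n2 : (0:𝒜) ≤ q * r * q := (sq r hr hr2) ▸ star_mul_self_nonneg (r * q)
  have n3 : (0:𝒜) ≤ q * s * q := (sq s hs hs2) ▸ star_mul_self_nonneg (s * q)
  have hz : q * p * q = 0 := by
    refine le_antisymm ?_ n1
    have := le_add_of_nonneg_right (a := q * p * q) (add_nonneg n2 n3)
    rwa [key] at this
  have : star (p * q) * (p * q) = 0 := by rw [sq p hp hp2, hz]
  exact (CStarRing.star_mul_self_eq_zero_iff _).mp this

end Aux

set_option maxHeartbeats 4000000 in
/-- Let `𝒜` be a unital C*-algebra and `A, …, H ∈ 𝒜` partial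
isometries such that every row and every column of
`M = [[AA*,BB*,CC*,DD*],[EE*,FF*,GG*,HH*],[B*B,A*A,D*D,C*C],[F*F,E*E,H*H,G*G]]`
sums to `1`. Then `U = [[A,B,C,D],[B*,A*,D*,C*],[E,F,G,H],[F*,E*,H*,G*]]` is unitary,
and `xy* = 0`, `x*y = 0` for every pair of distinct elements among `{A,B,C,D}` and
likewise among `{E,F,G,H}`. (Converse direction in the proof of Theorem 5.1.) -/
theorem qiso_free_group_magic_unitary_converse
    {𝒜 : Type*} [NormedRing 𝒜] [StarRing 𝒜] [CStarRing 𝒜] [CompleteSpace 𝒜]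
    [NormedAlgebra ℂ 𝒜] [StarModule ℂ 𝒜]
    (A B C D E F G H : 𝒜)
    (hpA : A * star A * A = A) (hpB : B * star B * B = B)
    (hpC : C * star C * C = C) (hpD : D * star D * D = D)
    (hpE : E * star E * E = E) (hpF : F * star F * F = F)
    (hpG : G * star G * G = G) (hpH : H * star H * H = H)
    (hrows : ∀ i : Fin 4, ∑ j : Fin 4, projectionMatrix A B C D E F G H i j = 1)
    (hcols : ∀ j : Fin 4, ∑ i : Fin 4, projectionMatrix A B C D E F G H i j = 1) :
    (fundamentalMatrix A B C D E F G H * star (fundamentalMatrix A B C D E F G H) = 1 ∧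
     star (fundamentalMatrix A B C D E F G H) * fundamentalMatrix A B C D E F G H = 1) ∧
    (∀ i j : Fin 4, i ≠ j →
      (![A, B, C, D] i) * star (![A, B, C, D] j) = 0 ∧
      star (![A, B, C, D] i) * (![A, B, C, D] j) = 0) ∧
    (∀ i j : Fin 4, i ≠ j →
      (![E, F, G, H] i) * star (![E, F, G, H] j) = 0 ∧
      star (![E, F, G, H] i) * (![E, F, G, H] j) = 0) := by
  have r0 : A * star A + B * star B + C * star C + D * star D = 1 := by simpa [projectionMatrix, Fin.sum_univ_four] using hrows 0
  have r1 : E * star E + F * star F + G * star G + H * star H = 1 := by simpa [projectionMatrix, Fin.sum_univ_four] using hrows 1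
  have r2 : star B * B + star A * A + star D * D + star C * C = 1 := by simpa [projectionMatrix, Fin.sum_univ_four] using hrows 2
  have r3 : star F * F + star E * E + star H * H + star G * G = 1 := by simpa [projectionMatrix, Fin.sum_univ_four] using hrows 3
  have c0 : A * star A + E * star E + star B * B + star F * F = 1 := by simpa [projectionMatrix, Fin.sum_univ_four] using hcols 0
  have c1 : B * star B + F * star F + star A * A + star E * E = 1 := by simpa [projectionMatrix, Fin.sum_univ_four] using hcols 1
  have c2 : C * star C + G * star G + star D * D + star H * H = 1 := by simpa [projectionMatrix, Fin.sum_univ_four] using hcols 2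
  have c3 : D * star D + H * star H + star C * C + star G * G = 1 := by simpa [projectionMatrix, Fin.sum_univ_four] using hcols 3
  have sP_A : star (A * star A) = A * star A := by rw [star_mul, star_star]
  have iP_A : (A * star A) * (A * star A) = A * star A := by rw [← mul_assoc, hpA]
  have sQ_A : star (star A * A) = star A * A := by rw [star_mul, star_star]
  have iQ_A : (star A * A) * (star A * A) = star A * A := by rw [mul_assoc, ← mul_assoc A, hpA]
  have e1_A : A * (star A * A) = A := by rw [← mul_assoc, hpA]
  have e3_A : star A * (A * star A) = star A := by have h := congrArg star hpA; rwa [star_mul, star_mul, star_star] at h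
  have e4_A : (star A * A) * star A = star A := by rw [mul_assoc]; exact e3_A
  have sP_B : star (B * star B) = B * star B := by rw [star_mul, star_star]
  have iP_B : (B * star B) * (B * star B) = B * star B := by rw [← mul_assoc, hpB]
  have sQ_B : star (star B * B) = star B * B := by rw [star_mul, star_star]
  have iQ_B : (star B * B) * (star B * B) = star B * B := by rw [mul_assoc, ← mul_assoc B, hpB]
  have e1_B : B * (star B * B) = B := by rw [← mul_assoc, hpB]
  have e3_B : star B * (B * star B) = star B := by have h := congrArg star hpB; rwa [star_mul, star_mul, star_star] at h
  have e4_B : (star B * B) * star B = star B := by rw [mul_assoc]; exact e3_B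
  have sP_C : star (C * star C) = C * star C := by rw [star_mul, star_star]
  have iP_C : (C * star C) * (C * star C) = C * star C := by rw [← mul_assoc, hpC]
  have sQ_C : star (star C * C) = star C * C := by rw [star_mul, star_star]
  have iQ_C : (star C * C) * (star C * C) = star C * C := by rw [mul_assoc, ← mul_assoc C, hpC]
  have e1_C : C * (star C * C) = C := by rw [← mul_assoc, hpC]
  have e3_C : star C * (C * star C) = star C := by have h := congrArg star hpC; rwa [star_mul, star_mul, star_star] at h
  have e4_C : (star C * C) * star C = star C := by rw [mul_assoc]; exact e3_C
  have sP_D : star (D * star D) = D * star D := by rw [star_mul, star_star]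
  have iP_D : (D * star D) * (D * star D) = D * star D := by rw [← mul_assoc, hpD]
  have sQ_D : star (star D * D) = star D * D := by rw [star_mul, star_star]
  have iQ_D : (star D * D) * (star D * D) = star D * D := by rw [mul_assoc, ← mul_assoc D, hpD]
  have e1_D : D * (star D * D) = D := by rw [← mul_assoc, hpD]
  have e3_D : star D * (D * star D) = star D := by have h := congrArg star hpD; rwa [star_mul, star_mul, star_star] at h
  have e4_D : (star D * D) * star D = star D := by rw [mul_assoc]; exact e3_D
  have sP_E : star (E * star E) = E * star E := by rw [star_mul, star_star]
  have iP_E : (E * star E) * (E * star E) = E * star E := by rw [← mul_assoc, hpE]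
  have sQ_E : star (star E * E) = star E * E := by rw [star_mul, star_star]
  have iQ_E : (star E * E) * (star E * E) = star E * E := by rw [mul_assoc, ← mul_assoc E, hpE]
  have e1_E : E * (star E * E) = E := by rw [← mul_assoc, hpE]
  have e3_E : star E * (E * star E) = star E := by have h := congrArg star hpE; rwa [star_mul, star_mul, star_star] at h
  have e4_E : (star E * E) * star E = star E := by rw [mul_assoc]; exact e3_E
  have sP_F : star (F * star F) = F * star F := by rw [star_mul, star_star]
  have iP_F : (F * star F) * (F * star F) = F * star F := by rw [← mul_assoc, hpF]
  have sQ_F : star (star F * F) = star F * F := by rw [star_mul, star_star]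
  have iQ_F : (star F * F) * (star F * F) = star F * F := by rw [mul_assoc, ← mul_assoc F, hpF]
  have e1_F : F * (star F * F) = F := by rw [← mul_assoc, hpF]
  have e3_F : star F * (F * star F) = star F := by have h := congrArg star hpF; rwa [star_mul, star_mul, star_star] at h
  have e4_F : (star F * F) * star F = star F := by rw [mul_assoc]; exact e3_F
  have sP_G : star (G * star G) = G * star G := by rw [star_mul, star_star]
  have iP_G : (G * star G) * (G * star G) = G * star G := by rw [← mul_assoc, hpG]
  have sQ_G : star (star G * G) = star G * G := by rw [star_mul, star_star]
  have iQ_G : (star G * G) * (star G * G) = star G * G := by rw [mul_assoc, ← mul_assoc G, hpG]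
  have e1_G : G * (star G * G) = G := by rw [← mul_assoc, hpG]
  have e3_G : star G * (G * star G) = star G := by have h := congrArg star hpG; rwa [star_mul, star_mul, star_star] at h
  have e4_G : (star G * G) * star G = star G := by rw [mul_assoc]; exact e3_G
  have sP_H : star (H * star H) = H * star H := by rw [star_mul, star_star]
  have iP_H : (H * star H) * (H * star H) = H * star H := by rw [← mul_assoc, hpH]
  have sQ_H : star (star H * H) = star H * H := by rw [star_mul, star_star]
  have iQ_H : (star H * H) * (star H * H) = star H * H := by rw [mul_assoc, ← mul_assoc H, hpH]
  have e1_H : H * (star H * H) = H := by rw [← mul_assoc, hpH]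
  have e3_H : star H * (H * star H) = star H := by have h := congrArg star hpH; rwa [star_mul, star_mul, star_star] at h
  have e4_H : (star H * H) * star H = star H := by rw [mul_assoc]; exact e3_H
  have h_sA_B : star A * B = 0 := Zmul e3_A hpB (orth4' (A * star A) (B * star B) (C * star C) (D * star D) sP_A iP_A sP_B iP_B sP_C iP_C sP_D iP_D (by rw [← r0]; try abel))
  have h_A_sB : A * star B = 0 := Zmul e1_A e4_B (orth4' (star A * A) (star B * B) (star D * D) (star C * C) sQ_A iQ_A sQ_B iQ_B sQ_D iQ_D sQ_C iQ_C (by rw [← r2]; try abel))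
  have h_sA_C : star A * C = 0 := Zmul e3_A hpC (orth4' (A * star A) (C * star C) (B * star B) (D * star D) sP_A iP_A sP_C iP_C sP_B iP_B sP_D iP_D (by rw [← r0]; try abel))
  have h_A_sC : A * star C = 0 := Zmul e1_A e4_C (orth4' (star A * A) (star C * C) (star B * B) (star D * D) sQ_A iQ_A sQ_C iQ_C sQ_B iQ_B sQ_D iQ_D (by rw [← r2]; try abel))
  have h_sA_D : star A * D = 0 := Zmul e3_A hpD (orth4' (A * star A) (D * star D) (B * star B) (C * star C) sP_A iP_A sP_D iP_D sP_B iP_B sP_C iP_C (by rw [← r0]; try abel))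
  have h_A_sD : A * star D = 0 := Zmul e1_A e4_D (orth4' (star A * A) (star D * D) (star B * B) (star C * C) sQ_A iQ_A sQ_D iQ_D sQ_B iQ_B sQ_C iQ_C (by rw [← r2]; try abel))
  have h_sB_A : star B * A = 0 := Zmul e3_B hpA (orth4' (B * star B) (A * star A) (C * star C) (D * star D) sP_B iP_B sP_A iP_A sP_C iP_C sP_D iP_D (by rw [← r0]; try abel))
  have h_B_sA : B * star A = 0 := Zmul e1_B e4_A (orth4' (star B * B) (star A * A) (star D * D) (star C * C) sQ_B iQ_B sQ_A iQ_A sQ_D iQ_D sQ_C iQ_C (by rw [← r2]; try abel))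
  have h_sB_C : star B * C = 0 := Zmul e3_B hpC (orth4' (B * star B) (C * star C) (A * star A) (D * star D) sP_B iP_B sP_C iP_C sP_A iP_A sP_D iP_D (by rw [← r0]; try abel))
  have h_B_sC : B * star C = 0 := Zmul e1_B e4_C (orth4' (star B * B) (star C * C) (star A * A) (star D * D) sQ_B iQ_B sQ_C iQ_C sQ_A iQ_A sQ_D iQ_D (by rw [← r2]; try abel))
  have h_sB_D : star B * D = 0 := Zmul e3_B hpD (orth4' (B * star B) (D * star D) (A * star A) (C * star C) sP_B iP_B sP_D iP_D sP_A iP_A sP_C iP_C (by rw [← r0]; try abel))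
  have h_B_sD : B * star D = 0 := Zmul e1_B e4_D (orth4' (star B * B) (star D * D) (star A * A) (star C * C) sQ_B iQ_B sQ_D iQ_D sQ_A iQ_A sQ_C iQ_C (by rw [← r2]; try abel))
  have h_sC_A : star C * A = 0 := Zmul e3_C hpA (orth4' (C * star C) (A * star A) (B * star B) (D * star D) sP_C iP_C sP_A iP_A sP_B iP_B sP_D iP_D (by rw [← r0]; try abel))
  have h_C_sA : C * star A = 0 := Zmul e1_C e4_A (orth4' (star C * C) (star A * A) (star B * B) (star D * D) sQ_C iQ_C sQ_A iQ_A sQ_B iQ_B sQ_D iQ_D (by rw [← r2]; try abel))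
  have h_sC_B : star C * B = 0 := Zmul e3_C hpB (orth4' (C * star C) (B * star B) (A * star A) (D * star D) sP_C iP_C sP_B iP_B sP_A iP_A sP_D iP_D (by rw [← r0]; try abel))
  have h_C_sB : C * star B = 0 := Zmul e1_C e4_B (orth4' (star C * C) (star B * B) (star A * A) (star D * D) sQ_C iQ_C sQ_B iQ_B sQ_A iQ_A sQ_D iQ_D (by rw [← r2]; try abel))
  have h_sC_D : star C * D = 0 := Zmul e3_C hpD (orth4' (C * star C) (D * star D) (A * star A) (B * star B) sP_C iP_C sP_D iP_D sP_A iP_A sP_B iP_B (by rw [← r0]; try abel))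
  have h_C_sD : C * star D = 0 := Zmul e1_C e4_D (orth4' (star C * C) (star D * D) (star B * B) (star A * A) sQ_C iQ_C sQ_D iQ_D sQ_B iQ_B sQ_A iQ_A (by rw [← r2]; try abel))
  have h_sD_A : star D * A = 0 := Zmul e3_D hpA (orth4' (D * star D) (A * star A) (B * star B) (C * star C) sP_D iP_D sP_A iP_A sP_B iP_B sP_C iP_C (by rw [← r0]; try abel))
  have h_D_sA : D * star A = 0 := Zmul e1_D e4_A (orth4' (star D * D) (star A * A) (star B * B) (star C * C) sQ_D iQ_D sQ_A iQ_A sQ_B iQ_B sQ_C iQ_C (by rw [← r2]; try abel))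
  have h_sD_B : star D * B = 0 := Zmul e3_D hpB (orth4' (D * star D) (B * star B) (A * star A) (C * star C) sP_D iP_D sP_B iP_B sP_A iP_A sP_C iP_C (by rw [← r0]; try abel))
  have h_D_sB : D * star B = 0 := Zmul e1_D e4_B (orth4' (star D * D) (star B * B) (star A * A) (star C * C) sQ_D iQ_D sQ_B iQ_B sQ_A iQ_A sQ_C iQ_C (by rw [← r2]; try abel))
  have h_sD_C : star D * C = 0 := Zmul e3_D hpC (orth4' (D * star D) (C * star C) (A * star A) (B * star B) sP_D iP_D sP_C iP_C sP_A iP_A sP_B iP_B (by rw [← r0]; try abel))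
  have h_D_sC : D * star C = 0 := Zmul e1_D e4_C (orth4' (star D * D) (star C * C) (star B * B) (star A * A) sQ_D iQ_D sQ_C iQ_C sQ_B iQ_B sQ_A iQ_A (by rw [← r2]; try abel))
  have h_sE_F : star E * F = 0 := Zmul e3_E hpF (orth4' (E * star E) (F * star F) (G * star G) (H * star H) sP_E iP_E sP_F iP_F sP_G iP_G sP_H iP_H (by rw [← r1]; try abel))
  have h_E_sF : E * star F = 0 := Zmul e1_E e4_F (orth4' (star E * E) (star F * F) (star H * H) (star G * G) sQ_E iQ_E sQ_F iQ_F sQ_H iQ_H sQ_G iQ_G (by rw [← r3]; try abel))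
  have h_sE_G : star E * G = 0 := Zmul e3_E hpG (orth4' (E * star E) (G * star G) (F * star F) (H * star H) sP_E iP_E sP_G iP_G sP_F iP_F sP_H iP_H (by rw [← r1]; try abel))
  have h_E_sG : E * star G = 0 := Zmul e1_E e4_G (orth4' (star E * E) (star G * G) (star F * F) (star H * H) sQ_E iQ_E sQ_G iQ_G sQ_F iQ_F sQ_H iQ_H (by rw [← r3]; try abel))
  have h_sE_H : star E * H = 0 := Zmul e3_E hpH (orth4' (E * star E) (H * star H) (F * star F) (G * star G) sP_E iP_E sP_H iP_H sP_F iP_F sP_G iP_G (by rw [← r1]; try abel))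
  have h_E_sH : E * star H = 0 := Zmul e1_E e4_H (orth4' (star E * E) (star H * H) (star F * F) (star G * G) sQ_E iQ_E sQ_H iQ_H sQ_F iQ_F sQ_G iQ_G (by rw [← r3]; try abel))
  have h_sF_E : star F * E = 0 := Zmul e3_F hpE (orth4' (F * star F) (E * star E) (G * star G) (H * star H) sP_F iP_F sP_E iP_E sP_G iP_G sP_H iP_H (by rw [← r1]; try abel))
  have h_F_sE : F * star E = 0 := Zmul e1_F e4_E (orth4' (star F * F) (star E * E) (star H * H) (star G * G) sQ_F iQ_F sQ_E iQ_E sQ_H iQ_H sQ_G iQ_G (by rw [← r3]; try abel))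
  have h_sF_G : star F * G = 0 := Zmul e3_F hpG (orth4' (F * star F) (G * star G) (E * star E) (H * star H) sP_F iP_F sP_G iP_G sP_E iP_E sP_H iP_H (by rw [← r1]; try abel))
  have h_F_sG : F * star G = 0 := Zmul e1_F e4_G (orth4' (star F * F) (star G * G) (star E * E) (star H * H) sQ_F iQ_F sQ_G iQ_G sQ_E iQ_E sQ_H iQ_H (by rw [← r3]; try abel))
  have h_sF_H : star F * H = 0 := Zmul e3_F hpH (orth4' (F * star F) (H * star H) (E * star E) (G * star G) sP_F iP_F sP_H iP_H sP_E iP_E sP_G iP_G (by rw [← r1]; try abel))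
  have h_F_sH : F * star H = 0 := Zmul e1_F e4_H (orth4' (star F * F) (star H * H) (star E * E) (star G * G) sQ_F iQ_F sQ_H iQ_H sQ_E iQ_E sQ_G iQ_G (by rw [← r3]; try abel))
  have h_sG_E : star G * E = 0 := Zmul e3_G hpE (orth4' (G * star G) (E * star E) (F * star F) (H * star H) sP_G iP_G sP_E iP_E sP_F iP_F sP_H iP_H (by rw [← r1]; try abel))
  have h_G_sE : G * star E = 0 := Zmul e1_G e4_E (orth4' (star G * G) (star E * E) (star F * F) (star H * H) sQ_G iQ_G sQ_E iQ_E sQ_F iQ_F sQ_H iQ_H (by rw [← r3]; try abel))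
  have h_sG_F : star G * F = 0 := Zmul e3_G hpF (orth4' (G * star G) (F * star F) (E * star E) (H * star H) sP_G iP_G sP_F iP_F sP_E iP_E sP_H iP_H (by rw [← r1]; try abel))
  have h_G_sF : G * star F = 0 := Zmul e1_G e4_F (orth4' (star G * G) (star F * F) (star E * E) (star H * H) sQ_G iQ_G sQ_F iQ_F sQ_E iQ_E sQ_H iQ_H (by rw [← r3]; try abel))
  have h_sG_H : star G * H = 0 := Zmul e3_G hpH (orth4' (G * star G) (H * star H) (E * star E) (F * star F) sP_G iP_G sP_H iP_H sP_E iP_E sP_F iP_F (by rw [← r1]; try abel))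
  have h_G_sH : G * star H = 0 := Zmul e1_G e4_H (orth4' (star G * G) (star H * H) (star F * F) (star E * E) sQ_G iQ_G sQ_H iQ_H sQ_F iQ_F sQ_E iQ_E (by rw [← r3]; try abel))
  have h_sH_E : star H * E = 0 := Zmul e3_H hpE (orth4' (H * star H) (E * star E) (F * star F) (G * star G) sP_H iP_H sP_E iP_E sP_F iP_F sP_G iP_G (by rw [← r1]; try abel))
  have h_H_sE : H * star E = 0 := Zmul e1_H e4_E (orth4' (star H * H) (star E * E) (star F * F) (star G * G) sQ_H iQ_H sQ_E iQ_E sQ_F iQ_F sQ_G iQ_G (by rw [← r3]; try abel))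
  have h_sH_F : star H * F = 0 := Zmul e3_H hpF (orth4' (H * star H) (F * star F) (E * star E) (G * star G) sP_H iP_H sP_F iP_F sP_E iP_E sP_G iP_G (by rw [← r1]; try abel))
  have h_H_sF : H * star F = 0 := Zmul e1_H e4_F (orth4' (star H * H) (star F * F) (star E * E) (star G * G) sQ_H iQ_H sQ_F iQ_F sQ_E iQ_E sQ_G iQ_G (by rw [← r3]; try abel))
  have h_sH_G : star H * G = 0 := Zmul e3_H hpG (orth4' (H * star H) (G * star G) (E * star E) (F * star F) sP_H iP_H sP_G iP_G sP_E iP_E sP_F iP_F (by rw [← r1]; try abel))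
  have h_H_sG : H * star G = 0 := Zmul e1_H e4_G (orth4' (star H * H) (star G * G) (star F * F) (star E * E) sQ_H iQ_H sQ_G iQ_G sQ_F iQ_F sQ_E iQ_E (by rw [← r3]; try abel))
  have h_A_B : A * B = 0 := Zmul e1_A hpB (orth4' (star A * A) (B * star B) (F * star F) (star E * E) sQ_A iQ_A sP_B iP_B sP_F iP_F sQ_E iQ_E (by rw [← c1]; try abel))
  have h_B_A : B * A = 0 := Zmul e1_B hpA (orth4' (star B * B) (A * star A) (E * star E) (star F * F) sQ_B iQ_B sP_A iP_A sP_E iP_E sQ_F iQ_F (by rw [← c0]; try abel))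
  have h_C_D : C * D = 0 := Zmul e1_C hpD (orth4' (star C * C) (D * star D) (H * star H) (star G * G) sQ_C iQ_C sP_D iP_D sP_H iP_H sQ_G iQ_G (by rw [← c3]; try abel))
  have h_D_C : D * C = 0 := Zmul e1_D hpC (orth4' (star D * D) (C * star C) (G * star G) (star H * H) sQ_D iQ_D sP_C iP_C sP_G iP_G sQ_H iQ_H (by rw [← c2]; try abel))
  have h_A_F : A * F = 0 := Zmul e1_A hpF (orth4' (star A * A) (F * star F) (B * star B) (star E * E) sQ_A iQ_A sP_F iP_F sP_B iP_B sQ_E iQ_E (by rw [← c1]; try abel))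
  have h_B_E : B * E = 0 := Zmul e1_B hpE (orth4' (star B * B) (E * star E) (A * star A) (star F * F) sQ_B iQ_B sP_E iP_E sP_A iP_A sQ_F iQ_F (by rw [← c0]; try abel))
  have h_C_H : C * H = 0 := Zmul e1_C hpH (orth4' (star C * C) (H * star H) (D * star D) (star G * G) sQ_C iQ_C sP_H iP_H sP_D iP_D sQ_G iQ_G (by rw [← c3]; try abel))
  have h_D_G : D * G = 0 := Zmul e1_D hpG (orth4' (star D * D) (G * star G) (C * star C) (star H * H) sQ_D iQ_D sP_G iP_G sP_C iP_C sQ_H iQ_H (by rw [← c2]; try abel))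
  have h_E_B : E * B = 0 := Zmul e1_E hpB (orth4' (star E * E) (B * star B) (F * star F) (star A * A) sQ_E iQ_E sP_B iP_B sP_F iP_F sQ_A iQ_A (by rw [← c1]; try abel))
  have h_F_A : F * A = 0 := Zmul e1_F hpA (orth4' (star F * F) (A * star A) (E * star E) (star B * B) sQ_F iQ_F sP_A iP_A sP_E iP_E sQ_B iQ_B (by rw [← c0]; try abel))
  have h_G_D : G * D = 0 := Zmul e1_G hpD (orth4' (star G * G) (D * star D) (H * star H) (star C * C) sQ_G iQ_G sP_D iP_D sP_H iP_H sQ_C iQ_C (by rw [← c3]; try abel))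
  have h_H_C : H * C = 0 := Zmul e1_H hpC (orth4' (star H * H) (C * star C) (G * star G) (star D * D) sQ_H iQ_H sP_C iP_C sP_G iP_G sQ_D iQ_D (by rw [← c2]; try abel))
  have h_E_F : E * F = 0 := Zmul e1_E hpF (orth4' (star E * E) (F * star F) (B * star B) (star A * A) sQ_E iQ_E sP_F iP_F sP_B iP_B sQ_A iQ_A (by rw [← c1]; try abel))
  have h_F_E : F * E = 0 := Zmul e1_F hpE (orth4' (star F * F) (E * star E) (A * star A) (star B * B) sQ_F iQ_F sP_E iP_E sP_A iP_A sQ_B iQ_B (by rw [← c0]; try abel))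
  have h_G_H : G * H = 0 := Zmul e1_G hpH (orth4' (star G * G) (H * star H) (D * star D) (star C * C) sQ_G iQ_G sP_H iP_H sP_D iP_D sQ_C iQ_C (by rw [← c3]; try abel))
  have h_H_G : H * G = 0 := Zmul e1_H hpG (orth4' (star H * H) (G * star G) (C * star C) (star D * D) sQ_H iQ_H sP_G iP_G sP_C iP_C sQ_D iQ_D (by rw [← c2]; try abel))
  have h_A_sE : A * star E = 0 := Zmul e1_A e4_E (orth4' (star A * A) (star E * E) (B * star B) (F * star F) sQ_A iQ_A sQ_E iQ_E sP_B iP_B sP_F iP_F (by rw [← c1]; try abel))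
  have h_B_sF : B * star F = 0 := Zmul e1_B e4_F (orth4' (star B * B) (star F * F) (A * star A) (E * star E) sQ_B iQ_B sQ_F iQ_F sP_A iP_A sP_E iP_E (by rw [← c0]; try abel))
  have h_C_sG : C * star G = 0 := Zmul e1_C e4_G (orth4' (star C * C) (star G * G) (D * star D) (H * star H) sQ_C iQ_C sQ_G iQ_G sP_D iP_D sP_H iP_H (by rw [← c3]; try abel))
  have h_D_sH : D * star H = 0 := Zmul e1_D e4_H (orth4' (star D * D) (star H * H) (C * star C) (G * star G) sQ_D iQ_D sQ_H iQ_H sP_C iP_C sP_G iP_G (by rw [← c2]; try abel))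
  have h_E_sA : E * star A = 0 := Zmul e1_E e4_A (orth4' (star E * E) (star A * A) (B * star B) (F * star F) sQ_E iQ_E sQ_A iQ_A sP_B iP_B sP_F iP_F (by rw [← c1]; try abel))
  have h_F_sB : F * star B = 0 := Zmul e1_F e4_B (orth4' (star F * F) (star B * B) (A * star A) (E * star E) sQ_F iQ_F sQ_B iQ_B sP_A iP_A sP_E iP_E (by rw [← c0]; try abel))
  have h_G_sC : G * star C = 0 := Zmul e1_G e4_C (orth4' (star G * G) (star C * C) (D * star D) (H * star H) sQ_G iQ_G sQ_C iQ_C sP_D iP_D sP_H iP_H (by rw [← c3]; try abel))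
  have h_H_sD : H * star D = 0 := Zmul e1_H e4_D (orth4' (star H * H) (star D * D) (C * star C) (G * star G) sQ_H iQ_H sQ_D iQ_D sP_C iP_C sP_G iP_G (by rw [← c2]; try abel))
  have h_sB_F : star B * F = 0 := Zmul e3_B hpF (orth4' (B * star B) (F * star F) (star A * A) (star E * E) sP_B iP_B sP_F iP_F sQ_A iQ_A sQ_E iQ_E (by rw [← c1]; try abel))
  have h_sA_E : star A * E = 0 := Zmul e3_A hpE (orth4' (A * star A) (E * star E) (star B * B) (star F * F) sP_A iP_A sP_E iP_E sQ_B iQ_B sQ_F iQ_F (by rw [← c0]; try abel))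
  have h_sD_H : star D * H = 0 := Zmul e3_D hpH (orth4' (D * star D) (H * star H) (star C * C) (star G * G) sP_D iP_D sP_H iP_H sQ_C iQ_C sQ_G iQ_G (by rw [← c3]; try abel))
  have h_sC_G : star C * G = 0 := Zmul e3_C hpG (orth4' (C * star C) (G * star G) (star D * D) (star H * H) sP_C iP_C sP_G iP_G sQ_D iQ_D sQ_H iQ_H (by rw [← c2]; try abel))
  have h_sF_B : star F * B = 0 := Zmul e3_F hpB (orth4' (F * star F) (B * star B) (star A * A) (star E * E) sP_F iP_F sP_B iP_B sQ_A iQ_A sQ_E iQ_E (by rw [← c1]; try abel))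
  have h_sE_A : star E * A = 0 := Zmul e3_E hpA (orth4' (E * star E) (A * star A) (star B * B) (star F * F) sP_E iP_E sP_A iP_A sQ_B iQ_B sQ_F iQ_F (by rw [← c0]; try abel))
  have h_sH_D : star H * D = 0 := Zmul e3_H hpD (orth4' (H * star H) (D * star D) (star C * C) (star G * G) sP_H iP_H sP_D iP_D sQ_C iQ_C sQ_G iQ_G (by rw [← c3]; try abel))
  have h_sG_C : star G * C = 0 := Zmul e3_G hpC (orth4' (G * star G) (C * star C) (star D * D) (star H * H) sP_G iP_G sP_C iP_C sQ_D iQ_D sQ_H iQ_H (by rw [← c2]; try abel))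
  have h_sB_sA : star B * star A = 0 := by rw [← star_mul, h_A_B, star_zero]
  have h_sA_sB : star A * star B = 0 := by rw [← star_mul, h_B_A, star_zero]
  have h_sD_sC : star D * star C = 0 := by rw [← star_mul, h_C_D, star_zero]
  have h_sC_sD : star C * star D = 0 := by rw [← star_mul, h_D_C, star_zero]
  have h_sF_sA : star F * star A = 0 := by rw [← star_mul, h_A_F, star_zero]
  have h_sE_sB : star E * star B = 0 := by rw [← star_mul, h_B_E, star_zero]
  have h_sH_sC : star H * star C = 0 := by rw [← star_mul, h_C_H, star_zero]
  have h_sG_sD : star G * star D = 0 := by rw [← star_mul, h_D_G, star_zero]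
  have h_sB_sE : star B * star E = 0 := by rw [← star_mul, h_E_B, star_zero]
  have h_sA_sF : star A * star F = 0 := by rw [← star_mul, h_F_A, star_zero]
  have h_sD_sG : star D * star G = 0 := by rw [← star_mul, h_G_D, star_zero]
  have h_sC_sH : star C * star H = 0 := by rw [← star_mul, h_H_C, star_zero]
  have h_sF_sE : star F * star E = 0 := by rw [← star_mul, h_E_F, star_zero]
  have h_sE_sF : star E * star F = 0 := by rw [← star_mul, h_F_E, star_zero]
  have h_sH_sG : star H * star G = 0 := by rw [← star_mul, h_G_H, star_zero]
  have h_sG_sH : star G * star H = 0 := by rw [← star_mul, h_H_G, star_zero]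
  have d0 : star A * A + B * star B + star E * E + F * star F = 1 := by rw [← c1]; abel
  have d1 : star B * B + A * star A + star F * F + E * star E = 1 := by rw [← c0]; abel
  have d2 : star C * C + D * star D + star G * G + H * star H = 1 := by rw [← c3]; abel
  have d3 : star D * D + C * star C + star H * H + G * star G = 1 := by rw [← c2]; abel
  refine ⟨⟨?_, ?_⟩, ?_, ?_⟩
  · unfold fundamentalMatrix
    rw [star_fin_four', mul_fin_four', one_fin_four']
    ext i j
    fin_cases i <;> fin_cases j <;>
      simp only [star_star, h_sA_B, h_A_sB, h_sA_C, h_A_sC, h_sA_D, h_A_sD, h_sB_A, h_B_sA, h_sB_C, h_B_sC, h_sB_D, h_B_sD, h_sC_A, h_C_sA, h_sC_B, h_C_sB, h_sC_D, h_C_sD, h_sD_A, h_D_sA, h_sD_B, h_D_sB, h_sD_C, h_D_sC, h_sE_F, h_E_sF, h_sE_G, h_E_sG, h_sE_H, h_E_sH, h_sF_E, h_F_sE, h_sF_G, h_F_sG, h_sF_H, h_F_sH, h_sG_E, h_G_sE, h_sG_F, h_G_sF, h_sG_H, h_G_sH, h_sH_E, h_H_sE, h_sH_F, h_H_sF, h_sH_G,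 h_H_sG, h_A_B, h_B_A, h_C_D, h_D_C, h_A_F, h_B_E, h_C_H, h_D_G, h_E_B, h_F_A, h_G_D, h_H_C, h_E_F, h_F_E, h_G_H, h_H_G, h_A_sE, h_B_sF, h_C_sG, h_D_sH, h_E_sA, h_F_sB, h_G_sC, h_H_sD, h_sB_F, h_sA_E, h_sD_H, h_sC_G, h_sF_B, h_sE_A, h_sH_D, h_sG_C, h_sB_sA, h_sA_sB, h_sD_sC, h_sC_sD, h_sF_sA, h_sE_sB, h_sH_sC, h_sG_sD, h_sB_sE, h_sA_sF, h_sD_sG, h_sC_sH, h_sF_sE, h_sE_sF, h_sH_sG, h_sG_sH, r0, r1, r2, r3, d0, d1, d2, d3,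
        add_zero, zero_add, Matrix.cons_val', Matrix.cons_val_zero, Matrix.cons_val_one,
        Matrix.head_cons, Matrix.empty_val', Matrix.cons_val_fin_one, Matrix.head_fin_const,
        Matrix.of_apply]
  · unfold fundamentalMatrix
    rw [star_fin_four', mul_fin_four', one_fin_four']
    ext i j
    fin_cases i <;> fin_cases j <;>
      simp only [star_star, h_sA_B, h_A_sB, h_sA_C, h_A_sC, h_sA_D, h_A_sD, h_sB_A, h_B_sA, h_sB_C, h_B_sC, h_sB_D, h_B_sD, h_sC_A, h_C_sA, h_sC_B, h_C_sB, h_sC_D, h_C_sD, h_sD_A, h_D_sA, h_sD_B, h_D_sB, h_sD_C, h_D_sC, h_sE_F, h_E_sF, h_sE_G, h_E_sG, h_sE_H, h_E_sH, h_sF_E, h_F_sE, h_sF_G, h_F_sG, h_sF_H, h_F_sH, h_sG_E, h_G_sE, h_sG_F, h_G_sF, h_sG_H, h_G_sH, h_sH_E, h_H_sE, h_sH_F, h_H_sF, h_sH_G, h_H_sG, h_A_B, h_B_A, h_C_D, h_D_C, h_A_F, h_B_E, h_C_H, h_D_G, h_E_B, h_F_A, h_G_D, h_H_C, h_E_F,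 h_F_E, h_G_H, h_H_G, h_A_sE, h_B_sF, h_C_sG, h_D_sH, h_E_sA, h_F_sB, h_G_sC, h_H_sD, h_sB_F, h_sA_E, h_sD_H, h_sC_G, h_sF_B, h_sE_A, h_sH_D, h_sG_C, h_sB_sA, h_sA_sB, h_sD_sC, h_sC_sD, h_sF_sA, h_sE_sB, h_sH_sC, h_sG_sD, h_sB_sE, h_sA_sF, h_sD_sG, h_sC_sH, h_sF_sE, h_sE_sF, h_sH_sG, h_sG_sH, r0, r1, r2, r3, d0, d1, d2, d3,
        add_zero, zero_add, Matrix.cons_val', Matrix.cons_val_zero, Matrix.cons_val_one,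
        Matrix.head_cons, Matrix.empty_val', Matrix.cons_val_fin_one, Matrix.head_fin_const,
        Matrix.of_apply]
  · intro i j hij
    fin_cases i <;> fin_cases j <;>
      first
        | exact absurd rfl hij
        | exact ⟨h_A_sB, h_sA_B⟩ | exact ⟨h_A_sC, h_sA_C⟩ | exact ⟨h_A_sD, h_sA_D⟩
        | exact ⟨h_B_sA, h_sB_A⟩ | exact ⟨h_B_sC, h_sB_C⟩ | exact ⟨h_B_sD, h_sB_D⟩
        | exact ⟨h_C_sA, h_sC_A⟩ | exact ⟨h_C_sB, h_sC_B⟩ | exact ⟨h_C_sD, h_sC_D⟩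
        | exact ⟨h_D_sA, h_sD_A⟩ | exact ⟨h_D_sB, h_sD_B⟩ | exact ⟨h_D_sC, h_sD_C⟩
  · intro i j hij
    fin_cases i <;> fin_cases j <;>
      first
        | exact absurd rfl hij
        | exact ⟨h_E_sF, h_sE_F⟩ | exact ⟨h_E_sG, h_sE_G⟩ | exact ⟨h_E_sH, h_sE_H⟩
        | exact ⟨h_F_sE, h_sF_E⟩ | exact ⟨h_F_sG, h_sF_G⟩ | exact ⟨h_F_sH, h_sF_H⟩
        | exact ⟨h_G_sE, h_sG_E⟩ | exact ⟨h_G_sF, h_sG_F⟩ | exact ⟨h_G_sH, h_sG_H⟩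
        | exact ⟨h_H_sE, h_sH_E⟩ | exact ⟨h_H_sF, h_sH_F⟩ | exact ⟨h_H_sG, h_sH_G⟩
end

section
/- Let m ≥ 1 and let F = F(m) be the free group on m generators, with l its word-length function with respect to the standard symmetric generating set (i.e. the reduced-word length). Then for all fixed g, h ∈ F the set { a ∈ F : l(ha) − l(a) − l(hag) + l(ag) ≠ 0 } is finite. (Consequently the operator T_{g,h} on ℓ²(F) given by T_{g,h} δ_a = (l(ha) − l(a) − l(hag) + l(ag)) δ_{hag} is of finite rank, so the spectral triple on C*_r(F) with its canonical real structure satisfies the first order condition modulo compacts.) -/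
namespace FreeGroupFOC

open FreeGroup

variable {α : Type*} [DecidableEq α]

/-- The quantity whose non-vanishing set we must show is finite. -/
def E (h g a : FreeGroup α) : ℤ :=
  (FreeGroup.norm (h * a) : ℤ) - (FreeGroup.norm a : ℤ)
    - (FreeGroup.norm (h * a * g) : ℤ) + (FreeGroup.norm (a * g) : ℤ)

lemma toWord_letter_mul (u : α × Bool) (a : FreeGroup α) :
    (mk [u] * a).toWord =
      List.casesOn a.toWord [u] fun hd tl =>
        if u.1 = hd.1 ∧ u.2 = !hd.2 then tl else u :: hd :: tl := by
  have h1 : mk [u] * a = mk ([u] ++ a.toWord) := by rw [← mul_mk, mk_toWord]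
  rw [h1, toWord_mk]
  show reduce (u :: a.toWord) = _
  rw [reduce.cons, reduce_toWord]

lemma norm_letter_mul (u : α × Bool) (a : FreeGroup α) (hd : α × Bool)
    (tl : List (α × Bool)) (hw : a.toWord = hd :: tl) :
    (FreeGroup.norm (mk [u] * a) : ℤ) - (FreeGroup.norm a : ℤ)
      = if u.1 = hd.1 ∧ u.2 = !hd.2 then -1 else 1 := by
  have h := toWord_letter_mul u a
  rw [hw] at h
  show ((mk [u] * a).toWord.length : ℤ) - (a.toWord.length : ℤ) = _
  rw [h, hw]
  by_cases hc : u.1 = hd.1 ∧ u.2 = !hd.2 <;> simp [hc] <;> push_cast <;> ring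

lemma invRev_append_singleton (L : List (α × Bool)) (v : α × Bool) :
    invRev (L ++ [v]) = (v.1, !v.2) :: invRev L := by
  simp [invRev]

lemma reduce_append_singleton (L : List (α × Bool)) (hL : reduce L = L) (v : α × Bool) :
    reduce (L ++ [v]) = L.dropLast ∨ reduce (L ++ [v]) = L ++ [v] := by
  have key : reduce (L ++ [v]) = invRev (reduce (invRev (L ++ [v]))) := by
    rw [reduce_invRev, invRev_invRev]
  rw [invRev_append_singleton] at key
  have hredL : reduce (invRev L) = invRev L := by rw [reduce_invRev, hL]
  rw [reduce.cons, hredL] at key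
  cases hiL : invRev L with
  | nil =>
    have : L = [] := by
      have := congrArg invRev hiL
      rwa [invRev_invRev, invRev_empty] at this
    subst this
    right
    simp at key
    simpa [invRev] using key
  | cons hd tl =>
    have hLeq : L = invRev tl ++ [(hd.1, !hd.2)] := by
      have := congrArg invRev hiL
      rw [invRev_invRev] at this
      rw [this]
      simp [invRev]
    rw [hiL] at key
    have key2 : reduce (L ++ [v]) =
        invRev (if (v.1, !v.2).1 = hd.1 ∧ (v.1, !v.2).2 = !hd.2 then tl
          else (v.1, !v.2) :: hd :: tl) := key
    by_cases hc : (v.1, !v.2).1 = hd.1 ∧ (v.1, !v.2).2 = !hd.2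
    · left
      rw [if_pos hc] at key2
      rw [key2, hLeq, List.dropLast_concat]
    · right
      rw [if_neg hc] at key2
      rw [key2]
      have h1 : invRev ((v.1, !v.2) :: hd :: tl) = invRev (hd :: tl) ++ [v] := by
        simp [invRev]
      rw [h1, ← hiL]
      have := congrArg invRev hiL
      rw [invRev_invRev] at this
      rw [hiL]
      rw [← this]

lemma head_mul_letter (a : FreeGroup α) (v hd x : α × Bool) (rest : List (α × Bool))
    (hw : a.toWord = hd :: x :: rest) :
    ∃ tl', (a * mk [v]).toWord = hd :: tl' := by
  have h1 : a * mk [v] = mk (a.toWord ++ [v]) := by rw [← mul_mk, mk_toWord]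
  have h2 : (a * mk [v]).toWord = reduce (a.toWord ++ [v]) := by rw [h1, toWord_mk]
  rcases reduce_append_singleton a.toWord (reduce_toWord a) v with hcase | hcase
  · refine ⟨(x :: rest).dropLast, ?_⟩
    rw [h2, hcase, hw]
    rfl
  · refine ⟨x :: rest ++ [v], ?_⟩
    rw [h2, hcase, hw]
    simp

lemma E_letter_letter_zero (u v : α × Bool) (a : FreeGroup α)
    (ha : 2 ≤ FreeGroup.norm a) : E (mk [u]) (mk [v]) a = 0 := by
  have hlen : 2 ≤ a.toWord.length := ha
  obtain ⟨hd, x, rest, hw⟩ : ∃ hd x rest, a.toWord = hd :: x :: rest := by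
    match hL : a.toWord, hlen with
    | hd :: x :: rest, _ => exact ⟨hd, x, rest, rfl⟩
  obtain ⟨tl', hw'⟩ := head_mul_letter a v hd x rest hw
  have e1 := norm_letter_mul u a hd _ hw
  have e2 := norm_letter_mul u (a * mk [v]) hd _ hw'
  have hassoc : mk [u] * a * mk [v] = mk [u] * (a * mk [v]) := mul_assoc _ _ _
  unfold E
  rw [hassoc]
  linarith [e1, e2]

lemma finite_norm_le [Finite α] (n : ℕ) :
    {a : FreeGroup α | FreeGroup.norm a ≤ n}.Finite := by
  have : {a : FreeGroup α | FreeGroup.norm a ≤ n}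
      ⊆ toWord ⁻¹' {l : List (α × Bool) | l.length ≤ n} := fun a ha => ha
  exact ((List.finite_length_le (α × Bool) n).preimage toWord_injective.injOn).subset this

lemma letter_letter [Finite α] (u v : α × Bool) :
    {a : FreeGroup α | E (mk [u]) (mk [v]) a ≠ 0}.Finite := by
  refine (finite_norm_le 1).subset fun a ha => ?_
  by_contra hn
  simp only [Set.mem_setOf_eq, not_le] at hn
  exact ha (E_letter_letter_zero u v a hn)

lemma E_mul_left (h₁ h₂ g a : FreeGroup α) :
    E (h₁ * h₂) g a = E h₁ g (h₂ * a) + E h₂ g a := by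
  simp only [E, mul_assoc]; ring

lemma E_mul_right (h g₁ g₂ a : FreeGroup α) :
    E h (g₁ * g₂) a = E h g₁ a + E h g₂ (a * g₁) := by
  simp only [E, mul_assoc]; ring

lemma finite_comp_left [Finite α] (h g c : FreeGroup α)
    (H : {a : FreeGroup α | E h g a ≠ 0}.Finite) :
    {a : FreeGroup α | E h g (c * a) ≠ 0}.Finite :=
  H.preimage (mul_right_injective c).injOn

lemma finite_comp_right [Finite α] (h g c : FreeGroup α)
    (H : {a : FreeGroup α | E h g a ≠ 0}.Finite) :
    {a : FreeGroup α | E h g (a * c) ≠ 0}.Finite :=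
  H.preimage (mul_left_injective c).injOn

lemma E_one_right (h a : FreeGroup α) : E h 1 a = 0 := by
  simp [E]

lemma E_one_left (g a : FreeGroup α) : E 1 g a = 0 := by
  simp [E]

lemma letter_any [Finite α] (u : α × Bool) (g : FreeGroup α) :
    {a : FreeGroup α | E (mk [u]) g a ≠ 0}.Finite := by
  induction g using FreeGroup.induction_on with
  | C1 =>
    have : {a : FreeGroup α | E (mk [u]) 1 a ≠ 0} = ∅ := by
      ext a; simp [E_one_right]
    rw [this]; exact Set.finite_empty
  | of x =>
    have hx : (of x : FreeGroup α) = mk [(x, true)] := rfl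
    rw [hx]
    exact letter_letter u (x, true)
  | inv_of x _ =>
    have hx : (of x : FreeGroup α)⁻¹ = mk [(x, false)] := by
      show (of x)⁻¹ = _
      rw [show (of x) = mk [(x, true)] from rfl, inv_mk]
      rfl
    rw [hx]
    exact letter_letter u (x, false)
  | mul g₁ g₂ ih₁ ih₂ =>
    have hsub : {a : FreeGroup α | E (mk [u]) (g₁ * g₂) a ≠ 0}
        ⊆ {a | E (mk [u]) g₁ a ≠ 0} ∪ {a | E (mk [u]) g₂ (a * g₁) ≠ 0} := by
      intro a ha
      by_contra hc
      simp only [Set.mem_union, Set.mem_setOf_eq, not_or, not_not] at hc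
      exact ha (by rw [E_mul_right, hc.1, hc.2]; ring)
    exact ((ih₁.union (finite_comp_right _ _ _ ih₂)).subset hsub)

lemma main [Finite α] (g h : FreeGroup α) :
    {a : FreeGroup α | E h g a ≠ 0}.Finite := by
  induction h using FreeGroup.induction_on with
  | C1 =>
    have : {a : FreeGroup α | E 1 g a ≠ 0} = ∅ := by
      ext a; simp [E_one_left]
    rw [this]; exact Set.finite_empty
  | of x =>
    have hx : (of x : FreeGroup α) = mk [(x, true)] := rfl
    rw [hx]
    exact letter_any (x, true) g
  | inv_of x _ =>
    have hx : (of x : FreeGroup α)⁻¹ = mk [(x, false)] := by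
      show (of x)⁻¹ = _
      rw [show (of x) = mk [(x, true)] from rfl, inv_mk]
      rfl
    rw [hx]
    exact letter_any (x, false) g
  | mul h₁ h₂ ih₁ ih₂ =>
    have hsub : {a : FreeGroup α | E (h₁ * h₂) g a ≠ 0}
        ⊆ {a | E h₂ g a ≠ 0} ∪ {a | E h₁ g (h₂ * a) ≠ 0} := by
      intro a ha
      by_contra hc
      simp only [Set.mem_union, Set.mem_setOf_eq, not_or, not_not] at hc
      exact ha (by rw [E_mul_left, hc.1, hc.2]; ring)
    exact ((ih₂.union (finite_comp_left _ _ _ ih₁)).subset hsub)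

end FreeGroupFOC

/-- Let `F = F(m)` (`m ≥ 1`) be the free group on `m` generators
with word-length function `l`. For all fixed `g, h ∈ F` the set
`{a : l(ha) - l(a) - l(hag) + l(ag) ≠ 0}` is finite. (Hence the commutator
`[Jλ_gJ⁻¹, [D, λ_h]]` is of finite rank: the first order condition holds modulo
compacts.) -/
theorem freeGroup_first_order_condition_set_finite
    (m : ℕ) (hm : 1 ≤ m) (g h : FreeGroup (Fin m)) :
    {a : FreeGroup (Fin m) |
      (FreeGroup.norm (h * a) : ℤ) - (FreeGroup.norm a : ℤ)
        - (FreeGroup.norm (h * a * g) : ℤ) + (FreeGroup.norm (a * g) : ℤ) ≠ 0}.Finite :=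
  FreeGroupFOC.main g h
end

section
/- Let 𝔽₂ be the free group on two generators with word-length function l, let γ ∈ 𝔽₂ and n ≥ 1, and let W_n = {κ ∈ 𝔽₂ : l(κ) = n} (a finite set). Then (3/4)·l(γ)²·card(W_n) ≤ ∑_{κ ∈ W_n} (l(γκ) − n)² ≤ l(γ)²·card(W_n). (Hence the ratio r_{n,γ} = ∑_{κ∈W_n} |l(γκ) − l(κ)|² / card(W_n) lies in the interval [(3/4)l(γ)², l(γ)²].) -/
open FreeGroup List Finset

namespace FGRB

variable {α : Type*} [DecidableEq α]

/-- The no-cancellation relation between adjacent letters. -/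
def R (a b : α × Bool) : Prop := ¬(a.1 = b.1 ∧ a.2 = !b.2)

lemma reduce_eq_self_of_chain' {L : List (α × Bool)} (h : List.Chain' R L) :
    FreeGroup.reduce L = L := by
  induction L with
  | nil => rfl
  | cons x L ih =>
    rw [FreeGroup.reduce.cons, ih h.tail]
    cases L with
    | nil => rfl
    | cons hd tl =>
      have hR : R x hd := (List.isChain_cons_cons.mp h).1
      simp only [if_neg hR]

lemma chain'_reduce (L : List (α × Bool)) : List.Chain' R (FreeGroup.reduce L) := by
  induction L with
  | nil => exact List.isChain_nil
  | cons x L ih =>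
    rw [FreeGroup.reduce.cons]
    rcases h : FreeGroup.reduce L with _ | ⟨hd, tl⟩
    · exact List.isChain_singleton _
    · rw [h] at ih
      dsimp only
      split_ifs with hc
      · exact ih.tail
      · exact List.isChain_cons_cons.mpr ⟨hc, ih⟩

lemma chain'_toWord (x : FreeGroup α) : List.Chain' R x.toWord := by
  rw [← FreeGroup.reduce_toWord]; exact chain'_reduce _

lemma norm_def (x : FreeGroup α) : x.norm = x.toWord.length := rfl

lemma toWord_mul_eq {x y : FreeGroup α} (h : List.Chain' R (x.toWord ++ y.toWord)) :
    (x * y).toWord = x.toWord ++ y.toWord := by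
  conv_lhs => rw [← FreeGroup.mk_toWord (x := x), ← FreeGroup.mk_toWord (x := y)]
  rw [FreeGroup.mul_mk, FreeGroup.toWord_mk, reduce_eq_self_of_chain' h]

/-- A letter permutation acting on a free group element. -/
def wmap (σ : α × Bool → α × Bool) (x : FreeGroup α) : FreeGroup α :=
  FreeGroup.mk (x.toWord.map σ)

/-- "σ preserves cancellation" -/
def Good (σ : α × Bool → α × Bool) : Prop :=
  ∀ a b : α × Bool, a.1 = b.1 ∧ a.2 = !b.2 → (σ a).1 = (σ b).1 ∧ (σ a).2 = !(σ b).2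

lemma chain'_map {σ : α × Bool → α × Bool} (hg : Good σ) (hinv : ∀ a, σ (σ a) = a)
    {L : List (α × Bool)} (h : List.Chain' R L) : List.Chain' R (L.map σ) := by
  rw [List.Chain', List.isChain_map]
  refine h.imp ?_
  intro a b hab hc
  exact hab (by simpa [hinv] using hg (σ a) (σ b) hc)

lemma toWord_wmap {σ : α × Bool → α × Bool} (hg : Good σ) (hinv : ∀ a, σ (σ a) = a)
    (x : FreeGroup α) : (wmap σ x).toWord = x.toWord.map σ := by
  rw [wmap, FreeGroup.toWord_mk, reduce_eq_self_of_chain' (chain'_map hg hinv (chain'_toWord x))]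

lemma norm_wmap {σ : α × Bool → α × Bool} (hg : Good σ) (hinv : ∀ a, σ (σ a) = a)
    (x : FreeGroup α) : (wmap σ x).norm = x.norm := by
  rw [norm_def, norm_def, toWord_wmap hg hinv, List.length_map]

lemma wmap_wmap {σ : α × Bool → α × Bool} (hg : Good σ) (hinv : ∀ a, σ (σ a) = a)
    (x : FreeGroup α) : wmap σ (wmap σ x) = x := by
  rw [wmap, toWord_wmap hg hinv, List.map_map]
  have : σ ∘ σ = id := funext hinv
  rw [this, List.map_id, FreeGroup.mk_toWord]

lemma headI_map {σ : α × Bool → α × Bool} {L : List (α × Bool)} [Inhabited (α × Bool)]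
    (h : L ≠ []) : (L.map σ).headI = σ L.headI := by
  cases L with
  | nil => exact absurd rfl h
  | cons a t => rfl

/-- Transitivity of good involutions on letters for `Fin 2`. -/
lemma exists_sigma (c b : Fin 2 × Bool) :
    ∃ σ : Fin 2 × Bool → Fin 2 × Bool, Good σ ∧ (∀ a, σ (σ a) = a) ∧ σ c = b := by
  refine ⟨fun p => ((if c.1 = b.1 then p.1 else Equiv.swap 0 1 p.1),
      (if c.2 = b.2 then p.2 else !p.2)), ?_, ?_, ?_⟩
  · intro a a' ⟨h1, h2⟩
    constructor
    · simp only [h1]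
    · split_ifs <;> simp [h2]
  · intro a
    ext
    · simp only
      split_ifs <;> simp
    · simp only
      split_ifs <;> simp
  · have hfin : ∀ x y : Fin 2, x ≠ y → Equiv.swap (0 : Fin 2) 1 x = y := by decide
    ext
    · simp only
      split_ifs with h
      · exact congrArg Fin.val h
      · exact congrArg Fin.val (hfin _ _ h)
    · simp only
      split_ifs with h
      · exact h
      · cases hc : c.2 <;> cases hb : b.2 <;> simp_all

end FGRB

/-- Let `𝔽₂` be the free group on two generators with word-length
function `l`, let `γ ∈ 𝔽₂` and `n ≥ 1`, and let `W_n = {κ : l κ = n}` (a finite set).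
Then `(3/4)·l(γ)²·card(W_n) ≤ ∑_{κ ∈ W_n} (l(γκ) - n)² ≤ l(γ)²·card(W_n)`. -/
theorem freeGroup_two_ratio_bounds
    (γ : FreeGroup (Fin 2)) (n : ℕ) (hn : 1 ≤ n)
    (hfin : {κ : FreeGroup (Fin 2) | FreeGroup.norm κ = n}.Finite) :
    (3 / 4 : ℝ) * (FreeGroup.norm γ : ℝ) ^ 2 * (hfin.toFinset.card : ℝ) ≤
      ∑ κ ∈ hfin.toFinset, ((FreeGroup.norm (γ * κ) : ℝ) - (n : ℝ)) ^ 2 ∧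
    ∑ κ ∈ hfin.toFinset, ((FreeGroup.norm (γ * κ) : ℝ) - (n : ℝ)) ^ 2 ≤
      (FreeGroup.norm γ : ℝ) ^ 2 * (hfin.toFinset.card : ℝ) := by
  classical
  set W := hfin.toFinset with hWdef
  have hmemW : ∀ κ : FreeGroup (Fin 2), κ ∈ W → FreeGroup.norm κ = n := by
    intro κ hκ
    simpa using (Set.Finite.mem_toFinset hfin).mp hκ
  set m := FreeGroup.norm γ with hm
  constructor
  · -- lower bound
    by_cases hγ1 : γ = 1
    · have hm0 : m = 0 := by rw [hm, hγ1, FreeGroup.norm_one]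
      rw [hm0]
      push_cast
      have : (0:ℝ) ≤ ∑ κ ∈ W, ((FreeGroup.norm (γ * κ) : ℝ) - (n : ℝ)) ^ 2 :=
        Finset.sum_nonneg fun κ _ => sq_nonneg _
      simpa using this
    · have hu : γ.toWord ≠ [] := fun h => hγ1 (FreeGroup.toWord_eq_nil_iff.mp h)
      set u := γ.toWord with hudef
      set c : Fin 2 × Bool := ((u.getLast hu).1, !(u.getLast hu).2) with hcdef
      have hvne : ∀ κ : FreeGroup (Fin 2), κ ∈ W → κ.toWord ≠ [] := by
        intro κ hκ h
        have h1 := hmemW κ hκ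
        rw [FGRB.norm_def, h] at h1
        simp at h1
        omega
      have key : ∀ κ ∈ W, κ.toWord.headI ≠ c → FreeGroup.norm (γ * κ) = m + n := by
        intro κ hκ hne
        have hch : List.Chain' FGRB.R (u ++ κ.toWord) := by
          rw [List.Chain', List.isChain_append]
          refine ⟨FGRB.chain'_toWord γ, FGRB.chain'_toWord κ, ?_⟩
          intro x hx y hy
          have hx' : x = u.getLast hu := by
            rw [List.getLast?_eq_getLast hu] at hx
            simpa using hx.symm
          have hy' : y = κ.toWord.headI := by
            rcases hvv : κ.toWord with _ | ⟨d, t⟩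
            · exact absurd hvv (hvne κ hκ)
            · rw [hvv] at hy
              simp at hy
              simp [hy]
          rintro ⟨h1, h2⟩
          apply hne
          rw [← hy']
          subst hx'
          refine Prod.ext_iff.mpr ⟨h1.symm, ?_⟩
          rw [hcdef]
          rw [h2, Bool.not_not]
        have hmul := FGRB.toWord_mul_eq hch
        rw [FGRB.norm_def, hmul, List.length_append]
        have h1 := hmemW κ hκ
        rw [FGRB.norm_def] at h1
        rw [hm, FGRB.norm_def, h1]
      set T := (W.filter fun κ => κ.toWord.headI = c) with hTdef
      have hcardfib : W.card = ∑ b : Fin 2 × Bool,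
          (W.filter fun κ => κ.toWord.headI = b).card :=
        Finset.card_eq_sum_card_fiberwise (fun κ _ => Finset.mem_univ _)
      have hfibeq : ∀ b : Fin 2 × Bool,
          (W.filter fun κ => κ.toWord.headI = b).card = T.card := by
        intro b
        obtain ⟨σ, hg, hinv, hσc⟩ := FGRB.exists_sigma c b
        have hσb : σ b = c := by rw [← hσc, hinv]
        rw [hTdef]
        refine (Finset.card_nbij' (FGRB.wmap σ) (FGRB.wmap σ) ?_ ?_ ?_ ?_).symm
        · intro κ hκ
          simp only [Finset.mem_coe, Finset.mem_filter] at hκ ⊢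
          obtain ⟨hκW, hh⟩ := hκ
          refine ⟨?_, ?_⟩
          · rw [hWdef, Set.Finite.mem_toFinset]
            show FreeGroup.norm _ = n
            rw [FGRB.norm_wmap hg hinv, hmemW κ hκW]
          · rw [FGRB.toWord_wmap hg hinv, FGRB.headI_map (hvne κ hκW), hh, hσc]
        · intro κ hκ
          simp only [Finset.mem_coe, Finset.mem_filter] at hκ ⊢
          obtain ⟨hκW, hh⟩ := hκ
          refine ⟨?_, ?_⟩
          · rw [hWdef, Set.Finite.mem_toFinset]
            show FreeGroup.norm _ = n
            rw [FGRB.norm_wmap hg hinv, hmemW κ hκW]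
          · rw [FGRB.toWord_wmap hg hinv, FGRB.headI_map (hvne κ hκW), hh, hσb]
        · intro κ _; exact FGRB.wmap_wmap hg hinv κ
        · intro κ _; exact FGRB.wmap_wmap hg hinv κ
      have h4t : W.card = 4 * T.card := by
        rw [hcardfib]
        rw [Finset.sum_congr rfl fun b _ => hfibeq b, Finset.sum_const, Finset.card_univ]
        simp [mul_comm]
      have hcard2 : (W.filter fun κ => ¬(κ.toWord.headI = c)).card = 3 * T.card := by
        have hs : (W.filter fun κ => ¬(κ.toWord.headI = c)).card = W.card - T.card := by
          rw [Finset.filter_not, Finset.card_sdiff_of_subset (Finset.filter_subset _ _), hTdef]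
        omega
      have hsum2 : ∑ κ ∈ W.filter (fun κ => ¬(κ.toWord.headI = c)),
          ((FreeGroup.norm (γ * κ) : ℝ) - (n : ℝ)) ^ 2
          = ((W.filter fun κ => ¬(κ.toWord.headI = c)).card : ℝ) * (m : ℝ) ^ 2 := by
        rw [Finset.sum_congr rfl (fun κ hκ => ?_), Finset.sum_const, nsmul_eq_mul]
        obtain ⟨hκW, hne⟩ := Finset.mem_filter.mp hκ
        rw [key κ hκW hne]
        push_cast
        ring
      have hsum1 : ∑ κ ∈ W.filter (fun κ => ¬(κ.toWord.headI = c)),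
          ((FreeGroup.norm (γ * κ) : ℝ) - (n : ℝ)) ^ 2
          ≤ ∑ κ ∈ W, ((FreeGroup.norm (γ * κ) : ℝ) - (n : ℝ)) ^ 2 :=
        Finset.sum_le_sum_of_subset_of_nonneg (Finset.filter_subset _ _)
          (fun κ _ _ => sq_nonneg _)
      calc (3 / 4 : ℝ) * (m : ℝ) ^ 2 * (W.card : ℝ)
          = ((3 * T.card : ℕ) : ℝ) * (m : ℝ) ^ 2 := by
            rw [h4t]; push_cast; ring
        _ = ∑ κ ∈ W.filter (fun κ => ¬(κ.toWord.headI = c)),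
              ((FreeGroup.norm (γ * κ) : ℝ) - (n : ℝ)) ^ 2 := by
            rw [hsum2, hcard2]
        _ ≤ _ := hsum1
  · -- upper bound
    have upper : ∀ κ ∈ W, ((FreeGroup.norm (γ * κ) : ℝ) - (n : ℝ)) ^ 2 ≤ (m : ℝ) ^ 2 := by
      intro κ hκ
      have h1 : FreeGroup.norm (γ * κ) ≤ m + n := by
        have h := FreeGroup.norm_mul_le γ κ
        rw [hmemW κ hκ] at h
        exact h
      have h2 : n ≤ m + FreeGroup.norm (γ * κ) := by
        have h := FreeGroup.norm_mul_le γ⁻¹ (γ * κ)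
        rw [inv_mul_cancel_left, FreeGroup.norm_inv_eq, hmemW κ hκ] at h
        exact h
      refine sq_le_sq' ?_ ?_
      · have := (Nat.cast_le (α := ℝ)).mpr h2
        push_cast at this ⊢
        linarith
      · have := (Nat.cast_le (α := ℝ)).mpr h1
        push_cast at this ⊢
        linarith
    calc ∑ κ ∈ W, ((FreeGroup.norm (γ * κ) : ℝ) - (n : ℝ)) ^ 2
        ≤ ∑ _κ ∈ W, (m : ℝ) ^ 2 := Finset.sum_le_sum upper
      _ = (m : ℝ) ^ 2 * (W.card : ℝ) := by rw [Finset.sum_const, nsmul_eq_mul, mul_comm]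
end

section
/- Let 𝔽₂ be the free group on two generators with word-length function l, and let W_n = {κ ∈ 𝔽₂ : l(κ) = n}. If γ, γ′ ∈ 𝔽₂ satisfy l(γ) = l(γ′), then for every n ∈ ℕ: ∑_{κ ∈ W_n} (l(γκ) − n)² = ∑_{κ ∈ W_n} (l(γ′κ) − n)². (The quantity ∑_{κ ∈ W_n} |l(γκ) − l(κ)|² depends only on the length of γ, and not on its actual form.) -/
namespace FG2Aux

open FreeGroup List

abbrev L2 := Fin 2 × Bool

def linv (x : L2) : L2 := (x.1, !x.2)

def swapL (x y z : L2) : L2 :=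
  if z = x then y else if z = y then x
  else if z = linv x then linv y else if z = linv y then linv x else z

theorem linv_linv : ∀ z : L2, linv (linv z) = z := by decide
theorem swapL_left : ∀ x y : L2, swapL x y x = y := by decide
theorem swapL_swapL : ∀ x y z : L2, swapL y x (swapL x y z) = z := by decide
theorem swapL_ne : ∀ x y a b : L2, b ≠ linv a → swapL x y b ≠ linv (swapL x y a) := by decide
theorem cancel_iff : ∀ x hd : L2, (x.1 = hd.1 ∧ x.2 = !hd.2) ↔ hd = linv x := by decide

def allL : List L2 := [(0,false),(0,true),(1,false),(1,true)]

def memS (oa op : Option L2) (z : L2) : Bool :=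
  oa.toList.all (fun a => z != a) && op.toList.all (fun p => z != linv p)

def E (op oq oa ob : Option L2) (x : L2) : L2 :=
  (allL.filter (memS ob oq)).getD ((allL.filter (memS oa op)).idxOf x) x

def Cond (op oq oa ob : Option L2) : Bool :=
  (op.isNone == oq.isNone) && (oa.isNone == ob.isNone) &&
  oa.toList.all (fun a => op.toList.all (fun p => a != linv p)) &&
  ob.toList.all (fun b => oq.toList.all (fun q => b != linv q))

theorem E_mem : ∀ (op oq oa ob : Option L2) (x : L2), Cond op oq oa ob = true →
    memS oa op x = true → memS ob oq (E op oq oa ob x) = true := by decide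

theorem E_inv : ∀ (op oq oa ob : Option L2) (x : L2), Cond op oq oa ob = true →
    memS oa op x = true → E oq op ob oa (E op oq oa ob x) = x := by decide

theorem memS_iff {oa op : Option L2} {z : L2} :
    memS oa op z = true ↔ (∀ a ∈ oa, z ≠ a) ∧ (∀ p ∈ op, z ≠ linv p) := by
  cases oa <;> cases op <;> simp [memS]

theorem Cond_iff {op oq oa ob : Option L2} :
    Cond op oq oa ob = true ↔
      (op.isNone = oq.isNone ∧ oa.isNone = ob.isNone ∧
       (∀ a ∈ oa, ∀ p ∈ op, a ≠ linv p) ∧ (∀ b ∈ ob, ∀ q ∈ oq, b ≠ linv q)) := by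
  cases oa <;> cases ob <;> cases op <;> cases oq <;> simp [Cond]

/-- reduced words -/
def Red' (L : List L2) : Prop := List.IsChain (fun a b => b ≠ linv a) L

theorem red'_reduce (L : List L2) : Red' (FreeGroup.reduce L) := by
  induction L with
  | nil => simp [Red']
  | cons x L ih =>
    rw [FreeGroup.reduce.cons]
    rcases h : FreeGroup.reduce L with _ | ⟨hd, tl⟩
    · simp [Red']
    · rw [h] at ih
      by_cases hc : x.1 = hd.1 ∧ x.2 = !hd.2
      · simp only [if_pos hc]; exact ih.tail
      · simp only [if_neg hc]
        exact List.isChain_cons_cons.2 ⟨fun he => hc ((cancel_iff x hd).2 he), ih⟩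

theorem reduce_eq_self {L : List L2} (h : Red' L) : FreeGroup.reduce L = L := by
  induction L with
  | nil => rfl
  | cons x L ih =>
    rw [FreeGroup.reduce.cons, ih h.tail]
    rcases L with _ | ⟨hd, tl⟩
    · rfl
    · have hx : hd ≠ linv x := (List.isChain_cons_cons.1 h).1
      simp only [if_neg (fun hc => hx ((cancel_iff x hd).1 hc))]

theorem norm_mk_red {L : List L2} (h : Red' L) :
    FreeGroup.norm (FreeGroup.mk L) = L.length := by
  simp [FreeGroup.norm, FreeGroup.toWord_mk, reduce_eq_self h]

theorem red'_toWord (x : FreeGroup (Fin 2)) : Red' x.toWord := by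
  rw [← FreeGroup.reduce_toWord]; exact red'_reduce _

theorem red'_invRev {L : List L2} (h : Red' L) : Red' (FreeGroup.invRev L) := by
  unfold FreeGroup.invRev Red'
  rw [List.isChain_reverse, List.isChain_map]
  refine h.imp (fun a b hab => ?_)
  show linv a ≠ linv (linv b)
  rw [linv_linv]
  exact fun he => hab he.symm

/-- common prefix length -/
def comm : List L2 → List L2 → ℕ
  | a :: u, x :: w => if x = a then comm u w + 1 else 0
  | _, _ => 0

@[simp] theorem comm_nil_left (w : List L2) : comm [] w = 0 := by cases w <;> rfl
@[simp] theorem comm_nil_right (u : List L2) : comm u [] = 0 := by cases u <;> rfl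

theorem invRev_eq {L : List L2} : FreeGroup.invRev L = (L.map linv).reverse := rfl

/-- Key length formula -/
theorem norm_inv_mul (u : List L2) : ∀ w : List L2, Red' u → Red' w →
    FreeGroup.norm ((FreeGroup.mk u)⁻¹ * FreeGroup.mk w) + 2 * comm u w
      = u.length + w.length := by
  induction u with
  | nil =>
    intro w _ hw
    have h1 : FreeGroup.mk ([] : List L2) = 1 := (FreeGroup.one_eq_mk).symm
    simp [h1, norm_mk_red hw]
  | cons a u' ih =>
    intro w hu hw
    rcases w with _ | ⟨x, w'⟩
    · have h1 : FreeGroup.mk ([] : List L2) = 1 := (FreeGroup.one_eq_mk).symm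
      rw [h1, mul_one, FreeGroup.norm_inv_eq, norm_mk_red hu, comm_nil_right]
      simp
    · by_cases hx : x = a
      · subst hx
        have key : (FreeGroup.mk (x :: u'))⁻¹ * FreeGroup.mk (x :: w')
            = (FreeGroup.mk u')⁻¹ * FreeGroup.mk w' := by
          have h1 : FreeGroup.mk (x :: u') = FreeGroup.mk [x] * FreeGroup.mk u' := by
            rw [FreeGroup.mul_mk]; rfl
          have h2 : FreeGroup.mk (x :: w') = FreeGroup.mk [x] * FreeGroup.mk w' := by
            rw [FreeGroup.mul_mk]; rfl
          rw [h1, h2, mul_inv_rev, mul_assoc, inv_mul_cancel_left]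
        have := ih w' hu.tail hw.tail
        have hc : comm (x :: u') (x :: w') = comm u' w' + 1 := by simp [comm]
        rw [key, hc]
        simp only [List.length_cons]
        omega
      · have hred : Red' (FreeGroup.invRev (a :: u') ++ x :: w') := by
          apply List.isChain_append.2
          refine ⟨red'_invRev hu, hw, ?_⟩
          intro p hp y hy
          have hsplit : FreeGroup.invRev (a :: u') = FreeGroup.invRev u' ++ [linv a] := by
            simp [invRev_eq]
          rw [hsplit, List.getLast?_append_of_ne_nil _ (by simp)] at hp
          simp at hp hy
          subst hp; subst hy
          rw [linv_linv]; exact hx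
        have key : (FreeGroup.mk (a :: u'))⁻¹ * FreeGroup.mk (x :: w')
            = FreeGroup.mk (FreeGroup.invRev (a :: u') ++ x :: w') := by
          rw [FreeGroup.inv_mk, FreeGroup.mul_mk]
        have hc0 : comm (a :: u') (x :: w') = 0 := by simp [comm, hx]
        rw [key, norm_mk_red hred, hc0]
        simp [FreeGroup.invRev_length]

/-- the tree automorphism carrying the path `u` to the path `v` -/
def psi : List L2 → List L2 → Option L2 → Option L2 → List L2 → List L2
  | a :: u', b :: v', op, oq, x :: w' =>
    if x = a then b :: psi u' v' (some a) (some b) w'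
    else (E op oq (some a) (some b) x) :: w'.map (swapL x (E op oq (some a) (some b) x))
  | [], [], op, oq, x :: w' =>
    (E op oq none none x) :: w'.map (swapL x (E op oq none none x))
  | _, _, _, _, w => w

theorem psi_spec : ∀ (w u v : List L2) (op oq : Option L2),
    Red' u → Red' v → Red' w → u.length = v.length →
    op.isNone = oq.isNone →
    (∀ p ∈ op, ∀ a ∈ u.head?, a ≠ linv p) →
    (∀ q ∈ oq, ∀ b ∈ v.head?, b ≠ linv q) →
    (∀ p ∈ op, ∀ x ∈ w.head?, x ≠ linv p) →
    (psi u v op oq w).length = w.length ∧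
    Red' (psi u v op oq w) ∧
    (∀ q ∈ oq, ∀ y ∈ (psi u v op oq w).head?, y ≠ linv q) ∧
    comm v (psi u v op oq w) = comm u w ∧
    psi v u oq op (psi u v op oq w) = w := by
  intro w
  induction w with
  | nil =>
    intro u v op oq _ _ _ hlen _ _ _ _
    rcases u with _ | ⟨a, u'⟩ <;> rcases v with _ | ⟨b, v'⟩ <;> simp_all [psi]
  | cons x w' ih =>
    intro u v op oq hu hv hw hlen hnone hpu hqv hpw
    rcases u with _ | ⟨a, u'⟩ <;> rcases v with _ | ⟨b, v'⟩
    · -- both empty: diverge at the root of the leftover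
      have hms : memS none op x = true := by
        rw [memS_iff]
        exact ⟨by simp, fun p hp => hpw p hp x rfl⟩
      have hcond : Cond op oq none none = true := by
        rw [Cond_iff]; exact ⟨hnone, rfl, by simp, by simp⟩
      have hmt := memS_iff.1 (E_mem op oq none none x hcond hms)
      set y := E op oq none none x with hy
      have hErev : E oq op none none y = x := E_inv op oq none none x hcond hms
      refine ⟨by simp [psi], ?_, ?_, by simp [psi, comm], ?_⟩
      · rw [show psi [] [] op oq (x :: w') = y :: w'.map (swapL x y) from rfl]
        apply List.isChain_cons.2
        constructor
        · intro z hz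
          rw [List.head?_map] at hz
          rcases hz' : w'.head? with _ | ⟨x1⟩ <;> rw [hz'] at hz
          · simp at hz
          · simp at hz
            have hx1 : x1 ≠ linv x := by
              have := List.isChain_cons.1 hw
              exact this.1 x1 hz'
            have h2 := swapL_ne x y x x1 hx1
            rw [swapL_left] at h2
            rw [← hz]
            exact h2
        · rw [List.isChain_map]
          exact hw.tail.imp (fun a b hab => swapL_ne x y a b hab)
      · intro q hq z hz
        simp [psi] at hz
        exact hz ▸ hmt.2 q hq
      · rw [show psi [] [] op oq (x :: w') = y :: w'.map (swapL x y) from rfl,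
          show psi [] [] oq op (y :: w'.map (swapL x y))
            = (E oq op none none y) :: (w'.map (swapL x y)).map (swapL y (E oq op none none y)) from rfl,
          hErev, List.map_map]
        congr 1
        have : (swapL y x ∘ swapL x y) = id := by
          funext z; exact swapL_swapL x y z
        rw [this, List.map_id]
    · simp at hlen
    · simp at hlen
    · -- both cons
      by_cases hx : x = a
      · subst hx
        have hrec := ih u' v' (some x) (some b) hu.tail hv.tail hw.tail (by simpa using hlen)
          rfl
          (by intro p hp a1 ha1; simp at hp; subst hp
              exact (List.isChain_cons.1 hu).1 a1 ha1)
          (by intro q hq b1 hb1; simp at hq; subst hq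
              exact (List.isChain_cons.1 hv).1 b1 hb1)
          (by intro p hp x1 hx1; simp at hp; subst hp
              exact (List.isChain_cons.1 hw).1 x1 hx1)
        obtain ⟨hl, hr, hh, hc, hinv⟩ := hrec
        have hpsi : psi (x :: u') (b :: v') op oq (x :: w')
            = b :: psi u' v' (some x) (some b) w' := by simp [psi]
        refine ⟨by simp [hpsi, hl], ?_, ?_, ?_, ?_⟩
        · rw [hpsi]
          exact List.isChain_cons.2 ⟨fun y hy => hh b rfl y hy, hr⟩
        · intro q hq z hz
          rw [hpsi] at hz; simp at hz
          exact hz ▸ hqv q hq b rfl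
        · rw [hpsi]; simp [comm, hc]
        · rw [hpsi,
            show psi (b :: v') (x :: u') oq op (b :: psi u' v' (some x) (some b) w')
              = x :: psi v' u' (some b) (some x) (psi u' v' (some x) (some b) w') from by
                simp [psi], hinv]
      · -- diverge
        have hms : memS (some a) op x = true := by
          rw [memS_iff]
          exact ⟨by simpa using hx, fun p hp => hpw p hp x rfl⟩
        have hcond : Cond op oq (some a) (some b) = true := by
          rw [Cond_iff]
          refine ⟨hnone, rfl, ?_, ?_⟩
          · intro a1 ha1 p hp; simp at ha1; subst ha1; exact hpu p hp a rfl
          · intro b1 hb1 q hq; simp at hb1; subst hb1; exact hqv q hq b rfl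
        have hmt := memS_iff.1 (E_mem op oq (some a) (some b) x hcond hms)
        set y := E op oq (some a) (some b) x with hy
        have hyb : y ≠ b := hmt.1 b rfl
        have hErev : E oq op (some b) (some a) y = x := E_inv op oq (some a) (some b) x hcond hms
        have hpsi : psi (a :: u') (b :: v') op oq (x :: w')
            = y :: w'.map (swapL x y) := by simp [psi, if_neg hx, ← hy]
        refine ⟨by simp [hpsi], ?_, ?_, ?_, ?_⟩
        · rw [hpsi]
          apply List.isChain_cons.2
          constructor
          · intro z hz
            rw [List.head?_map] at hz
            rcases hz' : w'.head? with _ | ⟨x1⟩ <;> rw [hz'] at hz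
            · simp at hz
            · simp at hz
              have hx1 : x1 ≠ linv x := (List.isChain_cons.1 hw).1 x1 hz'
              have h2 := swapL_ne x y x x1 hx1
              rw [swapL_left] at h2
              rw [← hz]
              exact h2
          · rw [List.isChain_map]
            exact hw.tail.imp (fun a b hab => swapL_ne x y a b hab)
        · intro q hq z hz
          rw [hpsi] at hz; simp at hz
          exact hz ▸ hmt.2 q hq
        · rw [hpsi]; simp [comm, if_neg hx, if_neg hyb]
        · rw [hpsi,
            show psi (b :: v') (a :: u') oq op (y :: w'.map (swapL x y))
              = (E oq op (some b) (some a) y)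
                :: (w'.map (swapL x y)).map (swapL y (E oq op (some b) (some a) y)) from by
                  simp [psi, if_neg hyb],
            hErev, List.map_map]
          have : (swapL y x ∘ swapL x y) = id := by
            funext z; exact swapL_swapL x y z
          rw [this, List.map_id]

end FG2Aux

open FG2Aux

/-- In the free group `𝔽₂` on two generators with word-length
function `l`, if `l γ = l γ'`, then for every `n` the sums
`∑_{κ ∈ W_n} (l(γκ) - n)²` and `∑_{κ ∈ W_n} (l(γ'κ) - n)²` coincide: the quantity
depends only on the length of `γ` and not on its actual form. -/
theorem freeGroup_two_sum_depends_only_on_length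
    (γ γ' : FreeGroup (Fin 2)) (hγγ' : FreeGroup.norm γ = FreeGroup.norm γ')
    (n : ℕ) (hfin : {κ : FreeGroup (Fin 2) | FreeGroup.norm κ = n}.Finite) :
    ∑ κ ∈ hfin.toFinset, ((FreeGroup.norm (γ * κ) : ℝ) - (n : ℝ)) ^ 2 =
      ∑ κ ∈ hfin.toFinset, ((FreeGroup.norm (γ' * κ) : ℝ) - (n : ℝ)) ^ 2 := by
  classical
  set u : List L2 := (γ⁻¹).toWord with hu_def
  set v : List L2 := (γ'⁻¹).toWord with hv_def
  have hu : Red' u := red'_toWord _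
  have hv : Red' v := red'_toWord _
  have hlen : u.length = v.length := by
    have h1 : FreeGroup.norm γ⁻¹ = FreeGroup.norm γ'⁻¹ := by
      rw [FreeGroup.norm_inv_eq, FreeGroup.norm_inv_eq]; exact hγγ'
    exact h1
  -- the spec specialized
  have spec : ∀ (u v : List L2), Red' u → Red' v → u.length = v.length →
      ∀ κ : FreeGroup (Fin 2),
      (psi u v none none κ.toWord).length = κ.toWord.length ∧
      Red' (psi u v none none κ.toWord) ∧
      comm v (psi u v none none κ.toWord) = comm u κ.toWord ∧
      psi v u none none (psi u v none none κ.toWord) = κ.toWord := by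
    intro u v hu hv hlen κ
    have h := psi_spec κ.toWord u v none none hu hv (red'_toWord κ) hlen rfl
      (by simp) (by simp) (by simp)
    exact ⟨h.1, h.2.1, h.2.2.2.1, h.2.2.2.2⟩
  have hγu : γ = (FreeGroup.mk u)⁻¹ := by
    rw [hu_def, FreeGroup.mk_toWord, inv_inv]
  have hγv : γ' = (FreeGroup.mk v)⁻¹ := by
    rw [hv_def, FreeGroup.mk_toWord, inv_inv]
  refine Finset.sum_nbij'
    (i := fun κ => FreeGroup.mk (psi u v none none κ.toWord))
    (j := fun κ => FreeGroup.mk (psi v u none none κ.toWord)) ?_ ?_ ?_ ?_ ?_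
  · intro κ hκ
    rw [Set.Finite.mem_toFinset] at *
    obtain ⟨h1, h2, _, _⟩ := spec u v hu hv hlen κ
    show FreeGroup.norm _ = n
    rw [norm_mk_red h2, h1]
    exact hκ
  · intro κ hκ
    rw [Set.Finite.mem_toFinset] at *
    obtain ⟨h1, h2, _, _⟩ := spec v u hv hu hlen.symm κ
    show FreeGroup.norm _ = n
    rw [norm_mk_red h2, h1]
    exact hκ
  · intro κ _
    obtain ⟨h1, h2, h3, h4⟩ := spec u v hu hv hlen κ
    have htw : (FreeGroup.mk (psi u v none none κ.toWord)).toWord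
        = psi u v none none κ.toWord := by
      rw [FreeGroup.toWord_mk, reduce_eq_self h2]
    simp only [htw, h4, FreeGroup.mk_toWord]
  · intro κ _
    obtain ⟨h1, h2, h3, h4⟩ := spec v u hv hu hlen.symm κ
    have htw : (FreeGroup.mk (psi v u none none κ.toWord)).toWord
        = psi v u none none κ.toWord := by
      rw [FreeGroup.toWord_mk, reduce_eq_self h2]
    simp only [htw, h4, FreeGroup.mk_toWord]
  · intro κ hκ
    obtain ⟨h1, h2, h3, h4⟩ := spec u v hu hv hlen κ
    have hκw : κ = FreeGroup.mk κ.toWord := (FreeGroup.mk_toWord).symm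
    have eq1 := norm_inv_mul u κ.toWord hu (red'_toWord κ)
    have eq2 := norm_inv_mul v (psi u v none none κ.toWord) hv h2
    have hnorm : FreeGroup.norm (γ * κ)
        = FreeGroup.norm (γ' * FreeGroup.mk (psi u v none none κ.toWord)) := by
      rw [hγu, hγv]
      conv_lhs => rw [hκw]
      omega
    rw [hnorm]
end

section
/- Let 𝔽₂ be the free group on two generators with word-length function l, let γ ∈ 𝔽₂ and set m = l(γ). Then for all n, n′ ≥ m (with n, n′ ≥ 1): (∑_{κ ∈ W_n} (l(γκ) − n)²)·card(W_{n′}) = (∑_{κ ∈ W_{n′}} (l(γκ) − n′)²)·card(W_n), i.e. the ratio r_{n,γ} = ∑_{κ∈W_n} |l(γκ) − l(κ)|² / card(W_n) is the same for all n ≥ m. (Only the first m letters of a word κ ∈ W_n influence possible cancellations in γκ; this common value R_m is the eigenvalue of the Laplacian of the spectral triple on C*_r(𝔽₂) on the eigenspace spanned by {λ_γ : l(γ) = m}.) -/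
set_option linter.unusedSectionVars false

open FreeGroup List

variable {α : Type*} [DecidableEq α]

/-- cancellation relation: `a` followed by `b` cancels. -/
def Canc (a b : α × Bool) : Prop := a.1 = b.1 ∧ a.2 = !b.2

instance : DecidableRel (Canc (α := α)) := fun a b => by unfold Canc; infer_instance

def IsRed (L : List (α × Bool)) : Prop := List.IsChain (fun a b => ¬ Canc a b) L

lemma isRed_reduce (L : List (α × Bool)) : IsRed (FreeGroup.reduce L) := by
  induction L with
  | nil => simp [IsRed]
  | cons x L ih =>
    rw [FreeGroup.reduce.cons]
    rcases h : FreeGroup.reduce L with _ | ⟨hd, tl⟩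
    · simp [IsRed]
    · rw [h] at ih
      by_cases hc : x.1 = hd.1 ∧ x.2 = !hd.2
      · simp only [hc, if_true]
        exact ih.tail
      · simp only [hc, if_false]
        exact (List.isChain_cons_cons.2 ⟨hc, ih⟩)

lemma reduce_eq_self_of_isRed {L : List (α × Bool)} (h : IsRed L) :
    FreeGroup.reduce L = L := by
  induction L with
  | nil => rfl
  | cons x L ih =>
    rw [FreeGroup.reduce.cons, ih h.tail]
    rcases L with _ | ⟨hd, tl⟩
    · rfl
    · have : ¬ Canc x hd := (List.isChain_cons_cons.1 h).1
      simp only [Canc] at this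
      simp [this]

lemma isRed_toWord (x : FreeGroup α) : IsRed x.toWord := by
  rw [← FreeGroup.reduce_toWord]; exact isRed_reduce _

lemma toWord_mk_of_isRed {L : List (α × Bool)} (h : IsRed L) :
    (FreeGroup.mk L).toWord = L := by
  rw [FreeGroup.toWord_mk, reduce_eq_self_of_isRed h]

lemma norm_mk_of_isRed {L : List (α × Bool)} (h : IsRed L) :
    FreeGroup.norm (FreeGroup.mk L) = L.length := by
  rw [FreeGroup.norm, toWord_mk_of_isRed h]

lemma toWord_mul' (x y : FreeGroup α) :
    (x * y).toWord = FreeGroup.reduce (x.toWord ++ y.toWord) := by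
  conv_lhs => rw [← FreeGroup.mk_toWord (x := x), ← FreeGroup.mk_toWord (x := y)]
  rw [FreeGroup.mul_mk, FreeGroup.toWord_mk]

lemma invRev_cons (x : α × Bool) (L : List (α × Bool)) :
    FreeGroup.invRev (x :: L) = FreeGroup.invRev L ++ [(x.1, !x.2)] := by
  simp [FreeGroup.invRev]

/-- Main structural lemma: reduction of a concatenation of two reduced words. -/
lemma reduce_append (k : List (α × Bool)) : ∀ g : List (α × Bool), IsRed g → IsRed k →
    ∃ p c q, g = p ++ FreeGroup.invRev c ∧ k = c ++ q ∧ IsRed (p ++ q) ∧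
      FreeGroup.reduce (g ++ k) = p ++ q := by
  induction k with
  | nil =>
    intro g hg _
    exact ⟨g, [], [], by simp [FreeGroup.invRev], by simp, by simpa using hg,
      by simpa using reduce_eq_self_of_isRed hg⟩
  | cons b k' ih =>
    intro g hg hk
    rcases List.eq_nil_or_concat g with rfl | ⟨g', a, rfl⟩
    · exact ⟨[], [], b :: k', by simp [FreeGroup.invRev], by simp, by simpa using hk,
        by simpa using reduce_eq_self_of_isRed hk⟩
    · rw [List.concat_eq_append] at hg ⊢
      by_cases hc : Canc a b
      · -- a cancels b
        have hg' : IsRed g' := hg.prefix (List.prefix_append _ _)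
        have hk' : IsRed k' := hk.tail
        obtain ⟨p, c, q, h1, h2, h3, h4⟩ := ih g' hg' hk'
        obtain ⟨h5, h6⟩ := hc
        have ha : a = (b.1, !b.2) := Prod.ext h5 h6
        refine ⟨p, b :: c, q, ?_, by simp [h2], h3, ?_⟩
        · rw [invRev_cons, ← List.append_assoc, ← h1, ha]
          simp [FreeGroup.invRev]
        · have step : FreeGroup.Red.Step (g' ++ [a] ++ b :: k') (g' ++ k') := by
            rw [ha, List.append_assoc, List.singleton_append]
            exact FreeGroup.Red.Step.not_rev
          rw [FreeGroup.reduce.Step.eq step, h4]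
      · -- no cancellation: already reduced
        have hred : IsRed ((g' ++ [a]) ++ b :: k') := by
          unfold IsRed
          rw [List.isChain_append]
          refine ⟨hg, hk, ?_⟩
          intro x hx y hy
          simp only [List.getLast?_concat, Option.mem_def, Option.some.injEq] at hx
          simp only [List.head?_cons, Option.mem_def, Option.some.injEq] at hy
          subst hx; subst hy
          exact hc
        exact ⟨g' ++ [a], [], b :: k', by simp [FreeGroup.invRev], by simp, hred,
          reduce_eq_self_of_isRed hred⟩

lemma norm_eq_length (x : FreeGroup α) : FreeGroup.norm x = x.toWord.length := rfl

lemma isRed_singleton (x : α × Bool) : IsRed [x] := List.isChain_singleton x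

lemma toWord_mul_letter (κ : FreeGroup α) (x : α × Bool)
    (h : IsRed (κ.toWord ++ [x])) :
    (κ * FreeGroup.mk [x]).toWord = κ.toWord ++ [x] := by
  rw [toWord_mul', toWord_mk_of_isRed (isRed_singleton x), reduce_eq_self_of_isRed h]

/-- Key step: appending a non-cancelling letter to `κ` (with `l κ ≥ l γ`)
increases `l (γκ)` by exactly one. -/
lemma norm_step (γ κ : FreeGroup α) (x : α × Bool)
    (hmn : FreeGroup.norm γ ≤ FreeGroup.norm κ)
    (hx : IsRed (κ.toWord ++ [x])) :
    FreeGroup.norm (γ * (κ * FreeGroup.mk [x])) = FreeGroup.norm (γ * κ) + 1 := by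
  obtain ⟨p, c, q, h1, h2, h3, h4⟩ :=
    reduce_append κ.toWord γ.toWord (isRed_toWord γ) (isRed_toWord κ)
  have htw : (γ * κ).toWord = p ++ q := by rw [toWord_mul', h4]
  rcases List.eq_nil_or_concat q with rfl | ⟨q', e, rfl⟩
  · -- q = []; with l γ ≤ l κ this forces κ = γ⁻¹
    have hlg : FreeGroup.norm γ = p.length + c.length := by
      rw [norm_eq_length, h1, List.length_append, FreeGroup.invRev_length]
    have hlk : FreeGroup.norm κ = c.length := by
      rw [norm_eq_length, h2]; simp
    have hp : p = [] := by
      rw [hlg, hlk] at hmn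
      simpa using List.length_eq_zero_iff.mp (by omega)
    have h1' : γ * κ = 1 := by
      rw [← FreeGroup.toWord_eq_nil_iff, htw, hp]; simp
    have : γ * (κ * FreeGroup.mk [x]) = FreeGroup.mk [x] := by
      rw [← mul_assoc, h1', one_mul]
    rw [this, norm_mk_of_isRed (isRed_singleton x), FreeGroup.norm_eq_zero.2 h1']
    rfl
  · -- q ends with letter e, which is also the last letter of κ
    rw [List.concat_eq_append] at h2 h3 htw
    have hke : κ.toWord.getLast? = some e := by
      rw [h2, ← List.append_assoc, List.getLast?_concat]
    have hcanc : ¬ Canc e x := by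
      unfold IsRed at hx
      rw [List.isChain_append] at hx
      exact hx.2.2 e hke x rfl
    have hred : IsRed ((γ * κ).toWord ++ [x]) := by
      unfold IsRed
      rw [htw, ← List.append_assoc, List.isChain_append]
      refine ⟨by rw [List.append_assoc]; exact h3, isRed_singleton x, ?_⟩
      intro u hu y hy
      rw [List.getLast?_concat] at hu
      simp only [Option.mem_def, Option.some.injEq, List.head?_cons] at hu hy
      subst hu; subst hy
      exact hcanc
    have hassoc : γ * (κ * FreeGroup.mk [x]) = (γ * κ) * FreeGroup.mk [x] :=
      (mul_assoc _ _ _).symm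
    rw [hassoc, norm_eq_length, toWord_mul_letter _ _ hred, List.length_append,
      norm_eq_length]
    simp

instance (L : List (α × Bool)) : Decidable (IsRed L) := by
  unfold IsRed; infer_instance

lemma canc_iff (a x : α × Bool) : Canc a x ↔ x = (a.1, !a.2) := by
  unfold Canc
  constructor
  · rintro ⟨h1, h2⟩
    ext
    · exact h1.symm
    · rw [h2, Bool.not_not]
  · rintro rfl
    simp

lemma isRed_append_singleton {L : List (α × Bool)} (hL : IsRed L) (h : L ≠ []) (x : α × Bool) :
    IsRed (L ++ [x]) ↔ ¬ Canc (L.getLast h) x := by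
  unfold IsRed
  rw [List.isChain_append]
  simp [show List.IsChain (fun a b => ¬ Canc a b) L from hL, List.getLast?_eq_getLast h]

lemma finite_norm (n : ℕ) : {κ : FreeGroup (Fin 2) | FreeGroup.norm κ = n}.Finite := by
  have h : {κ : FreeGroup (Fin 2) | FreeGroup.norm κ = n} ⊆
      FreeGroup.toWord ⁻¹' {L | L.length = n} := fun κ hκ => hκ
  exact ((List.finite_length_eq _ n).preimage FreeGroup.toWord_injective.injOn).subset h

def good (κ : FreeGroup (Fin 2)) : Finset (Fin 2 × Bool) :=
  Finset.univ.filter (fun x => IsRed (κ.toWord ++ [x]))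

lemma card_good (κ : FreeGroup (Fin 2)) (h : κ.toWord ≠ []) : (good κ).card = 3 := by
  set a := κ.toWord.getLast h with ha
  have : good κ = Finset.univ.erase (a.1, !a.2) := by
    ext x
    simp only [good, Finset.mem_filter, Finset.mem_univ, true_and, Finset.mem_erase, and_true]
    rw [isRed_append_singleton (isRed_toWord κ) h, ← ha, canc_iff]
  rw [this, Finset.card_erase_of_mem (Finset.mem_univ _)]
  rfl

lemma sum_decomp (F : FreeGroup (Fin 2) → ℝ) (n : ℕ) (hn : 1 ≤ n) :
    ∑ κ' ∈ (finite_norm (n + 1)).toFinset, F κ'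
      = ∑ κ ∈ (finite_norm n).toFinset, ∑ x ∈ good κ, F (κ * FreeGroup.mk [x]) := by
  rw [Finset.sum_sigma']
  symm
  refine Finset.sum_bij (fun b _ => b.1 * FreeGroup.mk [b.2]) ?_ ?_ ?_ ?_
  · rintro ⟨κ, x⟩ hb
    rw [Finset.mem_sigma] at hb
    obtain ⟨hκ, hx⟩ := hb
    rw [Set.Finite.mem_toFinset, Set.mem_setOf_eq] at hκ ⊢
    simp only [good, Finset.mem_filter] at hx
    rw [norm_eq_length, toWord_mul_letter _ _ hx.2, List.length_append,
      ← norm_eq_length, hκ]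
    rfl
  · rintro ⟨κ₁, x₁⟩ h₁ ⟨κ₂, x₂⟩ h₂ heq
    rw [Finset.mem_sigma] at h₁ h₂
    dsimp only at heq h₁ h₂
    have hw : κ₁.toWord ++ [x₁] = κ₂.toWord ++ [x₂] := by
      rw [← toWord_mul_letter κ₁ x₁, ← toWord_mul_letter κ₂ x₂, heq]
      · simpa [good] using h₂.2
      · simpa [good] using h₁.2
    have hlen : κ₁.toWord.length = κ₂.toWord.length := by
      rw [← norm_eq_length, ← norm_eq_length]
      have e1 := h₁.1; have e2 := h₂.1
      rw [Set.Finite.mem_toFinset, Set.mem_setOf_eq] at e1 e2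
      rw [e1, e2]
    obtain ⟨hw1, hw2⟩ := List.append_inj hw hlen
    have e1 : κ₁ = κ₂ := FreeGroup.toWord_injective hw1
    have e2 : x₁ = x₂ := by simpa using hw2
    subst e1; subst e2; rfl
  · intro κ' hκ'
    rw [Set.Finite.mem_toFinset, Set.mem_setOf_eq] at hκ'
    have hne : κ'.toWord ≠ [] := by
      intro hnil
      rw [norm_eq_length, hnil] at hκ'
      simp at hκ'
    have hdrop : IsRed κ'.toWord.dropLast := (isRed_toWord κ').dropLast
    have htw : (FreeGroup.mk κ'.toWord.dropLast).toWord = κ'.toWord.dropLast :=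
      toWord_mk_of_isRed hdrop
    have hfull : κ'.toWord.dropLast ++ [κ'.toWord.getLast hne] = κ'.toWord :=
      List.dropLast_append_getLast hne
    refine ⟨⟨FreeGroup.mk κ'.toWord.dropLast, κ'.toWord.getLast hne⟩, ?_, ?_⟩
    · rw [Finset.mem_sigma]
      constructor
      · rw [Set.Finite.mem_toFinset, Set.mem_setOf_eq, norm_mk_of_isRed hdrop,
          List.length_dropLast, ← norm_eq_length, hκ']
        omega
      · simp only [good, Finset.mem_filter, Finset.mem_univ, true_and]
        rw [htw, hfull]
        exact isRed_toWord κ'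
    · show FreeGroup.mk κ'.toWord.dropLast * FreeGroup.mk [κ'.toWord.getLast hne] = κ'
      rw [FreeGroup.mul_mk]
      conv_rhs => rw [← FreeGroup.mk_toWord (x := κ'), ← hfull]
  · intro b hb
    rfl

lemma S_succ (γ : FreeGroup (Fin 2)) (n : ℕ) (hn : 1 ≤ n) (hm : FreeGroup.norm γ ≤ n) :
    ∑ κ ∈ (finite_norm (n + 1)).toFinset,
        ((FreeGroup.norm (γ * κ) : ℝ) - ((n + 1 : ℕ) : ℝ)) ^ 2
      = 3 * ∑ κ ∈ (finite_norm n).toFinset,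
          ((FreeGroup.norm (γ * κ) : ℝ) - (n : ℝ)) ^ 2 := by
  rw [sum_decomp _ n hn, Finset.mul_sum]
  refine Finset.sum_congr rfl ?_
  intro κ hκ
  rw [Set.Finite.mem_toFinset, Set.mem_setOf_eq] at hκ
  have hne : κ.toWord ≠ [] := by
    intro h
    rw [norm_eq_length, h] at hκ
    simp at hκ
    omega
  have step : ∀ x ∈ good κ,
      ((FreeGroup.norm (γ * (κ * FreeGroup.mk [x])) : ℝ) - ((n + 1 : ℕ) : ℝ)) ^ 2
        = ((FreeGroup.norm (γ * κ) : ℝ) - (n : ℝ)) ^ 2 := by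
    intro x hx
    simp only [good, Finset.mem_filter] at hx
    rw [norm_step γ κ x (by rw [hκ]; exact hm) hx.2]
    push_cast
    ring
  rw [Finset.sum_congr rfl step, Finset.sum_const, card_good κ hne]
  push_cast
  ring

lemma C_succ (n : ℕ) (hn : 1 ≤ n) :
    ((finite_norm (n + 1)).toFinset.card : ℝ)
      = 3 * ((finite_norm n).toFinset.card : ℝ) := by
  have h1 : ((finite_norm (n + 1)).toFinset.card : ℝ)
      = ∑ _κ ∈ (finite_norm (n + 1)).toFinset, (1 : ℝ) := by
    rw [Finset.sum_const]; simp
  rw [h1, sum_decomp (fun _ => (1 : ℝ)) n hn]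
  have hc : ∀ κ ∈ (finite_norm n).toFinset, ∑ _x ∈ good κ, (1 : ℝ) = 3 := by
    intro κ hκ
    rw [Set.Finite.mem_toFinset, Set.mem_setOf_eq] at hκ
    have hne : κ.toWord ≠ [] := by
      intro h
      rw [norm_eq_length, h] at hκ
      simp at hκ
      omega
    rw [Finset.sum_const, card_good κ hne]
    simp
  rw [Finset.sum_congr rfl hc, Finset.sum_const]
  simp [mul_comm]

lemma key (γ : FreeGroup (Fin 2)) (n k : ℕ) (hn : 1 ≤ n) (hm : FreeGroup.norm γ ≤ n) :
    (∑ κ ∈ (finite_norm (n + k)).toFinset,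
        ((FreeGroup.norm (γ * κ) : ℝ) - ((n + k : ℕ) : ℝ)) ^ 2)
      = 3 ^ k * ∑ κ ∈ (finite_norm n).toFinset,
          ((FreeGroup.norm (γ * κ) : ℝ) - (n : ℝ)) ^ 2
    ∧ ((finite_norm (n + k)).toFinset.card : ℝ)
      = 3 ^ k * ((finite_norm n).toFinset.card : ℝ) := by
  induction k with
  | zero => simp
  | succ k ih =>
    have e : n + (k + 1) = (n + k) + 1 := by omega
    constructor
    · rw [e, S_succ γ (n + k) (by omega) (by omega), ih.1]
      ring
    · rw [e, C_succ (n + k) (by omega), ih.2]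
      ring

lemma main_le (γ : FreeGroup (Fin 2)) (n n' : ℕ) (hn : 1 ≤ n)
    (hmn : FreeGroup.norm γ ≤ n) (hle : n ≤ n')
    (hfin : {κ : FreeGroup (Fin 2) | FreeGroup.norm κ = n}.Finite)
    (hfin' : {κ : FreeGroup (Fin 2) | FreeGroup.norm κ = n'}.Finite) :
    (∑ κ ∈ hfin.toFinset, ((FreeGroup.norm (γ * κ) : ℝ) - (n : ℝ)) ^ 2) *
        (hfin'.toFinset.card : ℝ) =
      (∑ κ ∈ hfin'.toFinset, ((FreeGroup.norm (γ * κ) : ℝ) - (n' : ℝ)) ^ 2) *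
        (hfin.toFinset.card : ℝ) := by
  have h1 : hfin.toFinset = (finite_norm n).toFinset := by
    ext x; simp [Set.Finite.mem_toFinset]
  have h2 : hfin'.toFinset = (finite_norm n').toFinset := by
    ext x; simp [Set.Finite.mem_toFinset]
  obtain ⟨k, rfl⟩ := Nat.exists_eq_add_of_le hle
  obtain ⟨hS, hC⟩ := key γ n k hn hmn
  rw [h1, h2, hS, hC]
  ring



/-- In the free group `𝔽₂` on two generators with word-length
function `l`, let `γ ∈ 𝔽₂`, `m = l γ`. For all `n, n' ≥ max(m, 1)`:
`(∑_{κ ∈ W_n} (l(γκ) - n)²)·card(W_{n'}) = (∑_{κ ∈ W_{n'}} (l(γκ) - n')²)·card(W_n)`,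
i.e. the ratio `r_{n,γ}` is the same for all `n ≥ m`. -/
theorem freeGroup_two_ratio_stabilizes
    (γ : FreeGroup (Fin 2)) (n n' : ℕ) (hn : 1 ≤ n) (hn' : 1 ≤ n')
    (hmn : FreeGroup.norm γ ≤ n) (hmn' : FreeGroup.norm γ ≤ n')
    (hfin : {κ : FreeGroup (Fin 2) | FreeGroup.norm κ = n}.Finite)
    (hfin' : {κ : FreeGroup (Fin 2) | FreeGroup.norm κ = n'}.Finite) :
    (∑ κ ∈ hfin.toFinset, ((FreeGroup.norm (γ * κ) : ℝ) - (n : ℝ)) ^ 2) *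
        (hfin'.toFinset.card : ℝ) =
      (∑ κ ∈ hfin'.toFinset, ((FreeGroup.norm (γ * κ) : ℝ) - (n' : ℝ)) ^ 2) *
        (hfin.toFinset.card : ℝ) := by
  rcases le_total n n' with h | h
  · exact main_le γ n n' hn hmn h hfin hfin'
  · exact (main_le γ n' n hn' hmn' h hfin' hfin).symm
end

section
/- Let a : ℕ → ℝ and r : ℕ → ℝ be sequences, C ≥ 1 a real number, R ∈ ℝ and m ∈ ℕ, such that 1 ≤ a(n) ≤ Cⁿ for all n and r(n) = R for all n ≥ m. Then the quotient t ↦ (∑_{n=0}^{∞} r(n)·a(n)·e^{−t n²}) / (∑_{n=0}^{∞} a(n)·e^{−t n²}) is well defined for every t > 0 (both series converge and the denominator is nonzero) and converges to R as t → 0⁺. (Applied with a(n) = card(W_n) and r(n) = r_{n,γ}, this shows that the Laplacian eigenvalue c_γ = lim_{t→0⁺} ∑_{κ} |l(γκ) − l(κ)|² e^{−t l(κ)²} / ∑_{κ} e^{−t l(κ)²} exists and equals R_{l(γ)}, establishing admissibility of the spectral triple on C*_r(𝔽₂).) -/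
open Filter Topology

/-- Let `a, r : ℕ → ℝ`, `C ≥ 1`, `R ∈ ℝ` and `m ∈ ℕ` with
`1 ≤ a n ≤ Cⁿ` for all `n` and `r n = R` for all `n ≥ m`. Then for every `t > 0`
both series `∑ r n · a n · e^{-t n²}` and `∑ a n · e^{-t n²}` converge with nonzero
denominator, and the quotient
`t ↦ (∑' n, r n · a n · e^{-t n²}) / (∑' n, a n · e^{-t n²})` tends to `R` as
`t → 0⁺`. (Existence of the Laplacian eigenvalues `c_γ = R_{l(γ)}` for `C*_r(𝔽₂)`.) -/
theorem laplacian_eigenvalue_limit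
    (a r : ℕ → ℝ) (C : ℝ) (hC : 1 ≤ C) (R : ℝ) (m : ℕ)
    (ha : ∀ n : ℕ, 1 ≤ a n ∧ a n ≤ C ^ n)
    (hr : ∀ n : ℕ, m ≤ n → r n = R) :
    (∀ t : ℝ, 0 < t →
      Summable (fun n : ℕ => r n * a n * Real.exp (-t * (n : ℝ) ^ 2)) ∧
      Summable (fun n : ℕ => a n * Real.exp (-t * (n : ℝ) ^ 2)) ∧
      (∑' n : ℕ, a n * Real.exp (-t * (n : ℝ) ^ 2)) ≠ 0) ∧
    Tendsto
      (fun t : ℝ =>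
        (∑' n : ℕ, r n * a n * Real.exp (-t * (n : ℝ) ^ 2)) /
          (∑' n : ℕ, a n * Real.exp (-t * (n : ℝ) ^ 2)))
      (𝓝[>] (0 : ℝ)) (𝓝 R) := by
  have hC0 : (0:ℝ) < C := lt_of_lt_of_le zero_lt_one hC
  -- summability of the dominating series
  have key : ∀ t : ℝ, 0 < t →
      Summable (fun n : ℕ => C ^ n * Real.exp (-t * (n : ℝ) ^ 2)) := by
    intro t ht
    apply Summable.of_norm_bounded_eventually_nat (g := fun n => Real.exp (-(n:ℝ)))
      Real.summable_exp_neg_nat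
    obtain ⟨N, hN⟩ := exists_nat_ge ((Real.log C + 1) / t)
    filter_upwards [eventually_ge_atTop N] with n hn
    have hNn : (N:ℝ) ≤ n := Nat.cast_le.2 hn
    have hlog : Real.log C + 1 ≤ t * N := by
      rw [div_le_iff₀ ht] at hN; linarith [hN]
    have hcn : C ^ n = Real.exp (n * Real.log C) := by
      rw [Real.exp_nat_mul, Real.exp_log hC0]
    have hterm : C ^ n * Real.exp (-t * (n : ℝ) ^ 2) = Real.exp (n * Real.log C - t * n ^ 2) := by
      rw [hcn, ← Real.exp_add]; ring_nf
    rw [Real.norm_eq_abs, hterm, abs_of_pos (Real.exp_pos _), Real.exp_le_exp]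
    have hn0 : (0:ℝ) ≤ n := Nat.cast_nonneg n
    nlinarith [mul_le_mul_of_nonneg_left hNn (le_of_lt ht)]
  have hapos : ∀ n, (0:ℝ) < a n := fun n => lt_of_lt_of_le zero_lt_one (ha n).1
  have hD : ∀ t : ℝ, 0 < t → Summable (fun n : ℕ => a n * Real.exp (-t * (n : ℝ) ^ 2)) := by
    intro t ht
    refine Summable.of_nonneg_of_le (fun n => ?_) (fun n => ?_) (key t ht)
    · exact mul_nonneg (hapos n).le (Real.exp_nonneg _)
    · exact mul_le_mul_of_nonneg_right (ha n).2 (Real.exp_nonneg _)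
  have hNum : ∀ t : ℝ, 0 < t →
      Summable (fun n : ℕ => r n * a n * Real.exp (-t * (n : ℝ) ^ 2)) := by
    intro t ht
    have hd : Summable (fun n : ℕ => r n * a n * Real.exp (-t * (n : ℝ) ^ 2)
        - R * (a n * Real.exp (-t * (n : ℝ) ^ 2))) := by
      apply summable_of_finite_support
      apply Set.Finite.subset (Set.finite_Iio m)
      intro n hn
      simp only [Function.mem_support] at hn
      by_contra hmem
      simp only [Set.mem_Iio, not_lt] at hmem
      apply hn
      rw [hr n hmem]; ring
    have := hd.add ((hD t ht).mul_left R)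
    refine this.congr fun n => ?_
    ring
  refine ⟨fun t ht => ⟨hNum t ht, hD t ht, ?_⟩, ?_⟩
  · have : 0 < ∑' n : ℕ, a n * Real.exp (-t * (n : ℝ) ^ 2) := by
      refine Summable.tsum_pos (hD t ht) (fun n => mul_nonneg (hapos n).le (Real.exp_nonneg _)) 0 ?_
      exact mul_pos (hapos 0) (Real.exp_pos _)
    exact this.ne'
  -- the limit
  set D : ℝ → ℝ := fun t => ∑' n : ℕ, a n * Real.exp (-t * (n : ℝ) ^ 2) with hDdef
  set Nu : ℝ → ℝ := fun t => ∑' n : ℕ, r n * a n * Real.exp (-t * (n : ℝ) ^ 2) with hNdef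
  have hDpos : ∀ t : ℝ, 0 < t → 0 < D t := by
    intro t ht
    refine Summable.tsum_pos (hD t ht) (fun n => mul_nonneg (hapos n).le (Real.exp_nonneg _)) 0 ?_
    exact mul_pos (hapos 0) (Real.exp_pos _)
  -- D tends to atTop
  have hDtop : Tendsto D (𝓝[>] (0:ℝ)) atTop := by
    rw [tendsto_atTop]
    intro b
    obtain ⟨K, hK⟩ := exists_nat_gt b
    have hcont : Tendsto (fun t : ℝ => ∑ n ∈ Finset.range K, Real.exp (-t * (n:ℝ)^2))
        (𝓝 (0:ℝ)) (𝓝 (∑ n ∈ Finset.range K, Real.exp (-(0:ℝ) * (n:ℝ)^2))) := by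
      apply tendsto_finset_sum
      intro i _
      exact (Real.continuous_exp.comp (by continuity)).tendsto 0
    have hval : (∑ n ∈ Finset.range K, Real.exp (-(0:ℝ) * (n:ℝ)^2)) = K := by
      simp
    rw [hval] at hcont
    have hev : ∀ᶠ t in 𝓝 (0:ℝ), b < ∑ n ∈ Finset.range K, Real.exp (-t * (n:ℝ)^2) :=
      hcont.eventually_const_lt hK
    filter_upwards [nhdsWithin_le_nhds hev, self_mem_nhdsWithin] with t hb (ht : 0 < t)
    have hle : ∑ n ∈ Finset.range K, Real.exp (-t * (n:ℝ)^2) ≤ D t := by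
      have h1 : ∑ n ∈ Finset.range K, Real.exp (-t * (n:ℝ)^2)
          ≤ ∑ n ∈ Finset.range K, a n * Real.exp (-t * (n:ℝ)^2) := by
        apply Finset.sum_le_sum
        intro i _
        nlinarith [(ha i).1, Real.exp_pos (-t * (i:ℝ)^2)]
      refine h1.trans (Summable.sum_le_tsum _ (fun i _ => ?_) (hD t ht))
      exact mul_nonneg (hapos i).le (Real.exp_nonneg _)
    linarith
  -- numerator minus R * D is bounded
  set B : ℝ := ∑ n ∈ Finset.range m, |r n - R| * a n with hBdef
  have hbound : ∀ t : ℝ, 0 < t → |Nu t - R * D t| ≤ B := by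
    intro t ht
    have heq : Nu t - R * D t
        = ∑' n : ℕ, (r n - R) * (a n * Real.exp (-t * (n : ℝ) ^ 2)) := by
      rw [hNdef, hDdef]
      rw [← tsum_mul_left, ← Summable.tsum_sub (hNum t ht) ((hD t ht).mul_left R)]
      congr 1; ext n; ring
    have hfin : (∑' n : ℕ, (r n - R) * (a n * Real.exp (-t * (n : ℝ) ^ 2)))
        = ∑ n ∈ Finset.range m, (r n - R) * (a n * Real.exp (-t * (n : ℝ) ^ 2)) := by
      apply tsum_eq_sum
      intro n hn
      rw [hr n (by simpa using hn)]; ring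
    rw [heq, hfin]
    refine (Finset.abs_sum_le_sum_abs _ _).trans ?_
    apply Finset.sum_le_sum
    intro i _
    rw [abs_mul, abs_mul]
    have he1 : Real.exp (-t * (i:ℝ)^2) ≤ 1 := by
      apply Real.exp_le_one_iff.mpr
      nlinarith [sq_nonneg ((i:ℝ))]
    rw [abs_of_pos (hapos i), abs_of_pos (Real.exp_pos _)]
    have h2 : a i * Real.exp (-t * (i:ℝ)^2) ≤ a i := by nlinarith [hapos i]
    exact mul_le_mul_of_nonneg_left h2 (abs_nonneg _)
  -- assemble
  have hzero : Tendsto (fun t : ℝ => (Nu t - R * D t) / D t) (𝓝[>] (0:ℝ)) (𝓝 0) := by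
    have hb : Tendsto (fun t => B / D t) (𝓝[>] (0:ℝ)) (𝓝 0) :=
      Tendsto.div_atTop tendsto_const_nhds hDtop
    apply squeeze_zero_norm' ?_ hb
    filter_upwards [self_mem_nhdsWithin] with t (ht : 0 < t)
    rw [Real.norm_eq_abs, abs_div, abs_of_pos (hDpos t ht)]
    gcongr
    · exact (hDpos t ht).le
    · exact hbound t ht
  have hfinal : Tendsto (fun t : ℝ => R + (Nu t - R * D t) / D t) (𝓝[>] (0:ℝ)) (𝓝 R) := by
    have := (tendsto_const_nhds (x := R) (f := 𝓝[>] (0:ℝ))).add hzero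
    simpa using this
  apply hfinal.congr'
  filter_upwards [self_mem_nhdsWithin] with t (ht : 0 < t)
  have hD0 : D t ≠ 0 := (hDpos t ht).ne'
  have key2 : ∀ x y : ℝ, y ≠ 0 → R + (x - R * y) / y = x / y := by
    intro x y hy; field_simp; ring
  exact key2 (Nu t) (D t) hD0
end
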